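/- Visitable paths of a shift: for a negative behaviour A of base ξi ⊢, the visitable paths of the positive shift ↑A (of base ⊢ ξ) are exactly the daimon together with the paths (+, ξ, {i})·p for p a visitable path of A; i.e. V_{↑A} = {✠} ∪ (+,ξ,{i})·V_A. -/

import Mathlib

namespace Ludics

abbrev Address := List ℕ

/-- An action of Ludics: the daimon, or a proper action given by a polarity
(`true` = positive), a focus address and a ramification. -/
inductive Action where
  | daimon : Action
  | proper (pos : Bool) (focus : Address) (ram : Finset ℕ) : Action
deriving DecidableEq

namespace Action

def isPositive : Action → Bool
  | daimon => true
  | proper pos _ _ => pos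

def focus? : Action → Option Address
  | daimon => none
  | proper _ ξ _ => some ξ

/-- Reverse the polarity of an action. -/
def dual : Action → Action
  | daimon => daimon
  | proper pos ξ I => proper (!pos) ξ I

/-- `a.justifiesB b` : the focus of `b` is one of the addresses created by `a`. -/
def justifiesB : Action → Action → Bool
  | proper _ ξ I, proper _ ζ _ => decide (∃ i ∈ I, ζ = ξ ++ [i])
  | _, _ => false

def justifies (a b : Action) : Prop := a.justifiesB b = true

end Action

/-- A sequent of a base: an optional left address (at most one) and a finite
set of right addresses. -/
structure Sequent where
  left : Option Address
  right : Finset Address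

abbrev Base := List Sequent

def Base.isPositive (β : Base) : Prop := ∃ σ ∈ β, σ.left = none

/-- An action is initial w.r.t. a base if its focus belongs to the base
(on the side corresponding to its polarity). -/
def Initial (β : Base) (a : Action) : Prop :=
  ∃ pol ξ I, a = .proper pol ξ I ∧
    ∃ σ ∈ β, (pol = true ∧ ξ ∈ σ.right) ∨ (pol = false ∧ σ.left = some ξ)

/-- A sequent "owns" an action when its focus is hereditarily justified by an
address of the sequent (i.e. extends an address of the sequent). -/
def Sequent.owns (σ : Sequent) (a : Action) : Prop :=
  ∃ ξ, a.focus? = some ξ ∧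
    ((∃ γ, σ.left = some γ ∧ γ <+: ξ) ∨ (∃ δ ∈ σ.right, δ <+: ξ))

def Sequent.addresses (σ : Sequent) : Set Address :=
  (match σ.left with | some γ => {γ} | none => ∅) ∪ ↑σ.right

def Base.addresses (β : Base) : Set Address :=
  {a | ∃ σ ∈ β, a ∈ σ.addresses}

/-- The dual base: each sequent `Γ ⊢ Δ` gives sequents `⊢ Γ` and `δ ⊢` for δ ∈ Δ. -/
noncomputable def Sequent.dualSequents (σ : Sequent) : List Sequent :=
  (match σ.left with
    | some γ => [⟨none, ({γ} : Finset Address)⟩]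
    | none => []) ++
    σ.right.toList.map fun δ => ⟨some δ, (∅ : Finset Address)⟩

noncomputable def Base.dual (β : Base) : Base := (β.map Sequent.dualSequents).flatten

/-- View of a sequence, computed on the reversed sequence (most recent action
first), with fuel. -/
def viewRevAux : ℕ → List Action → List Action
  | 0, _ => []
  | _ + 1, [] => []
  | n + 1, a :: w =>
    if a.isPositive then a :: viewRevAux n w
    else a :: viewRevAux n (w.dropWhile fun b => !(b.justifiesB a))

def viewRev (s : List Action) : List Action := viewRevAux s.length s

/-- The view `⌜s⌝` of a sequence of actions. -/
def view (s : List Action) : List Action := (viewRev s.reverse).reverse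

/-- `p` is a path based on `β`. -/
structure IsPath (β : Base) (p : List Action) : Prop where
  alternating : p.Chain' fun a b => a.isPositive ≠ b.isPositive
  justified : ∀ w a, w ++ [a] <+: p → a ≠ Action.daimon →
    Initial β a ∨ ∃ b ∈ w, b.justifies a
  negJump : ∀ w a b, w ++ [a] <+: p → a.isPositive = true → b ∈ w →
    b.justifies a → b ∈ view w
  posJump : ∀ w a, w ++ [a] <+: p → a.isPositive = true → a ≠ Action.daimon →
    ∀ σ ∈ β, (∃ f, a.focus? = some f ∧ f ∈ σ.right) →
      (w = [] ∧ σ.left = none) ∨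
      ∃ w' b, w = w' ++ [b] ∧ b.isPositive = false ∧ σ.owns b
  linearity : (p.filterMap Action.focus?).Nodup
  daimonLast : ∀ w, w ++ [Action.daimon] <+: p → w ++ [Action.daimon] = p
  daimonFirst : p.head? = some Action.daimon → β.isPositive
  totality : β.isPositive → ∃ a t, p = a :: t ∧
    (a = Action.daimon ∨ (a.isPositive = true ∧ Initial β a))

/-- A chronicle: a non-empty path where each non-initial negative action is
justified by the immediately preceding action. -/
def IsChronicle (β : Base) (c : List Action) : Prop :=
  IsPath β c ∧ c ≠ [] ∧
    ∀ w a b, w ++ [a, b] <+: c → b.isPositive = false →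
      Initial β b ∨ a.justifies b

/-- The dual of a positive-ended sequence: reverse all polarities, removing a
final daimon if present and appending one otherwise. -/
def dualSeq (p : List Action) : List Action :=
  if p.getLast? = some Action.daimon then p.dropLast.map Action.dual
  else p.map Action.dual ++ [Action.daimon]

/-- Positive-ended (possibly empty) sequence. -/
def PosEnded (p : List Action) : Prop :=
  p = [] ∨ ∃ a, p.getLast? = some a ∧ a.isPositive = true

/-- A (non-empty) negative-starting, positive-ended block. -/
def NegBlock (b : List Action) : Prop :=
  b ≠ [] ∧ (∀ a, b.head? = some a → a.isPositive = false) ∧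
    ∀ a, b.getLast? = some a → a.isPositive = true

def EndsWithDaimon (p : List Action) : Prop := p.getLast? = some Action.daimon

/-- Basic shuffle of two positive-ended negative paths: interleaving by
positive-ended negative blocks; if the last `p`-block ends with the daimon
then the last `q`-block is empty. -/
def ShuffleNeg (p q r : List Action) : Prop :=
  ∃ ps qs : List (List Action),
    ps.length = qs.length ∧
    (∀ b ∈ ps, b = [] ∨ NegBlock b) ∧
    (∀ b ∈ qs, b = [] ∨ NegBlock b) ∧
    ps.flatten = p ∧ qs.flatten = q ∧
    (List.zipWith (· ++ ·) ps qs).flatten = r ∧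
    (EndsWithDaimon (ps.getLast?.getD []) → qs.getLast?.getD [] = [])

/-- The shuffle `r ∈ p ⧢ q`, including the extensions to two daimon-ended
paths and to paths with a common positive-ended prefix. -/
inductive Shuffle : List Action → List Action → List Action → Prop where
  | base {p q r} : ShuffleNeg p q r → Shuffle p q r
  | daiLeft {p q r} {κ₁ κ₂ : Action} :
      Shuffle (p ++ [κ₁, Action.daimon]) q r →
      Shuffle (p ++ [κ₁, Action.daimon]) (q ++ [κ₂, Action.daimon]) r
  | daiRight {p q r} {κ₁ κ₂ : Action} :
      Shuffle p (q ++ [κ₂, Action.daimon]) r →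
      Shuffle (p ++ [κ₁, Action.daimon]) (q ++ [κ₂, Action.daimon]) r
  | pre {s p q r} : s ≠ [] → PosEnded s → Shuffle p q r →
      Shuffle (s ++ p) (s ++ q) (s ++ r)

/-- Shuffle closure of a set of (positive-ended) paths. -/
inductive ShuffleClosure (P : Set (List Action)) : List Action → Prop where
  | mem {p} : p ∈ P → ShuffleClosure P p
  | shuffle {p q r} : ShuffleClosure P p → ShuffleClosure P q →
      Shuffle p q r → ShuffleClosure P r

/-- Coherence of chronicles: comparability and propagation. -/
def Coherent (c₁ c₂ : List Action) : Prop :=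
  (∀ w κ₁ κ₂, w ++ [κ₁] <+: c₁ → w ++ [κ₂] <+: c₂ →
      κ₁ = κ₂ ∨ (κ₁.isPositive = false ∧ κ₂.isPositive = false)) ∧
  (∀ w ξ₁ I₁ w₁ σ₁ ξ₂ I₂ w₂ σ₂,
      w ++ Action.proper false ξ₁ I₁ :: w₁ ++ [σ₁] <+: c₁ →
      w ++ Action.proper false ξ₂ I₂ :: w₂ ++ [σ₂] <+: c₂ →
      ξ₁ ≠ ξ₂ → ∀ f, σ₁.focus? = some f → σ₂.focus? ≠ some f)

/-- A design, as a prefix-closed clique of chronicles. -/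
structure IsDesign (β : Base) (D : Set (List Action)) : Prop where
  chron : ∀ c ∈ D, IsChronicle β c
  prefixClosed : ∀ c ∈ D, ∀ d, d <+: c → d ≠ [] → d ∈ D
  coherent : ∀ c ∈ D, ∀ d ∈ D, Coherent c d
  maxPos : ∀ c ∈ D, (∀ κ, c ++ [κ] ∉ D) →
    ∃ a, c.getLast? = some a ∧ a.isPositive = true
  posNonempty : β.isPositive → D.Nonempty

/-- A net of designs, abusively seen as its set of chronicles. -/
structure IsNet (β : Base) (R : Set (List Action)) : Prop where
  chron : ∀ c ∈ R, IsChronicle β c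
  prefixClosed : ∀ c ∈ R, ∀ d, d <+: c → d ≠ [] → d ∈ R

/-- `p` is a path of the design/net `D`: each view of each non-empty prefix of
`p` is a chronicle of `D`. -/
def PathOf (β : Base) (D : Set (List Action)) (p : List Action) : Prop :=
  IsPath β p ∧ ∀ q, q <+: p → q ≠ [] → view q ∈ D

/-- Whose turn it is in normalization: `dpos` says whether the design `D` owns
the first (positive) move; afterwards `D` moves exactly after negative actions. -/
def TurnD (dpos : Prop) (s : List Action) : Prop :=
  match s.getLast? with
  | none => dpos
  | some a => a.isPositive = false

/-- Interaction (normalization) between a design `D` and a counter-net `R`,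
described by its visited sequence `s` (seen from `D`): it converges from
state `s` if the design to move plays the daimon, or it plays a proper
positive action accepted (in dual form) by the other one, and the interaction
converges from the extended state. -/
inductive Conv (D R : Set (List Action)) (dpos : Prop) : List Action → Prop where
  | daiD {s} : TurnD dpos s → view (s ++ [Action.daimon]) ∈ D → Conv D R dpos s
  | daiR {s} : ¬ TurnD dpos s →
      view (s.map Action.dual ++ [Action.daimon]) ∈ R → Conv D R dpos s
  | stepD {s κ} : TurnD dpos s → κ.isPositive = true → κ ≠ Action.daimon →
      view (s ++ [κ]) ∈ D → view ((s ++ [κ]).map Action.dual) ∈ R →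
      Conv D R dpos (s ++ [κ]) → Conv D R dpos s
  | stepR {s κ} : ¬ TurnD dpos s → κ.isPositive = false →
      view ((s ++ [κ]).map Action.dual) ∈ R → view (s ++ [κ]) ∈ D →
      Conv D R dpos (s ++ [κ]) → Conv D R dpos s

/-- The simple base `⊢ ξ` (positive) or `ξ ⊢` (negative). -/
def simpleBase (ξ : Address) (pos : Bool) : Base :=
  if pos then [⟨none, {ξ}⟩] else [⟨some ξ, ∅⟩]

/-- The orthogonal of a set of designs on a simple base. -/
def orthSet (ξ : Address) (pos : Bool) (A : Set (Set (List Action))) :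
    Set (Set (List Action)) :=
  {E | IsDesign (simpleBase ξ !pos) E ∧
    ∀ D ∈ A, if pos then Conv D E True [] else Conv E D True []}

def biorth (ξ : Address) (pos : Bool) (A : Set (Set (List Action))) :
    Set (Set (List Action)) :=
  orthSet ξ (!pos) (orthSet ξ pos A)

/-- A behaviour: a bi-orthogonally closed set of designs on a simple base. -/
structure Behaviour (ξ : Address) (pos : Bool) where
  designs : Set (Set (List Action))
  isDesign : ∀ D ∈ designs, IsDesign (simpleBase ξ pos) D
  closed : designs = biorth ξ pos designs

/-- Visitable paths of a set of designs: traces of convergent normalizations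
with the orthogonal, characterized as the dual pairs of paths. -/
def VisitableSet (ξ : Address) (pos : Bool) (S : Set (Set (List Action)))
    (p : List Action) : Prop :=
  ∃ D ∈ S, ∃ E ∈ orthSet ξ pos S,
    PathOf (simpleBase ξ pos) D p ∧ PathOf (simpleBase ξ !pos) E (dualSeq p)

def Visitable {ξ : Address} {pos : Bool} (A : Behaviour ξ pos)
    (p : List Action) : Prop :=
  VisitableSet ξ pos A.designs p

/-- Material (incarnated) design of a behaviour: inclusion-minimal. -/
def Material {ξ : Address} {pos : Bool} (A : Behaviour ξ pos)
    (D : Set (List Action)) : Prop :=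
  D ∈ A.designs ∧ ∀ E ∈ A.designs, E ⊆ D → E = D

/-- Completion of a design: add daimon-ended chronicles after every missing
negative action. -/
def completion (β : Base) (D : Set (List Action)) : Set (List Action) :=
  D ∪ {c' | ∃ c ∈ D, ∃ ξ I,
    (c' = c ++ [Action.proper false ξ I] ∨
      c' = c ++ [Action.proper false ξ I, Action.daimon]) ∧
    IsChronicle β (c ++ [Action.proper false ξ I, Action.daimon]) ∧
    c ++ [Action.proper false ξ I] ∉ D}

def DaiDesign : Set (List Action) := {[Action.daimon]}

def firstAction (D : Set (List Action)) (κ : Action) : Prop :=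
  ∃ c ∈ D, c.head? = some κ

/-- Directory of a set of positive designs on `⊢ ξ`. -/
def directory (ξ : Address) (A : Set (Set (List Action))) : Set (Finset ℕ) :=
  {I | ∃ D ∈ A, firstAction D (Action.proper true ξ I)}

/-- Alien positive behaviours: ramifications of first actions pairwise disjoint. -/
def Alien (ξ : Address) (A B : Behaviour ξ true) : Prop :=
  ∀ I ∈ directory ξ A.designs, ∀ J ∈ directory ξ B.designs, Disjoint I J

/-- Extension of the first action of a design by a set `J`. -/
def extDesign (ξ : Address) (J : Finset ℕ) (D : Set (List Action)) :
    Set (List Action) :=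
  {c | ∃ I t, (Action.proper true ξ I :: t) ∈ D ∧
      c = Action.proper true ξ (I ∪ J) :: t}

/-- The extension `A_[B]` of a set of designs along another. -/
def extended (ξ : Address) (A B : Set (Set (List Action))) :
    Set (Set (List Action)) :=
  insert DaiDesign
    {D' | ∃ D ∈ A, (∃ I, firstAction D (Action.proper true ξ I)) ∧
      ∃ E ∈ B, ∃ J, firstAction E (Action.proper true ξ J) ∧
        D' = extDesign ξ J D}

/-- The extension `P_[Q]` of a set of paths along another. -/
def extPaths (ξ : Address) (P Q : Set (List Action)) : Set (List Action) :=
  insert [Action.daimon]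
    {p | ∃ I t, (Action.proper true ξ I :: t) ∈ P ∧
      ∃ q ∈ Q, ∃ J, q.head? = some (Action.proper true ξ J) ∧
        p = Action.proper true ξ (I ∪ J) :: t}

/-- Prefixing a (negative) design by the positive action `(+, ξ, {i})`. -/
def shiftD (ξ : Address) (i : ℕ) (D : Set (List Action)) : Set (List Action) :=
  insert [Action.proper true ξ {i}]
    {c | ∃ d ∈ D, c = Action.proper true ξ {i} :: d}

/-- `C = ↑N` : the positive shift of the negative behaviour `N`. -/
def IsShiftOf (ξ : Address) (i : ℕ) (C : Behaviour ξ true)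
    (N : Behaviour (ξ ++ [i]) false) : Prop :=
  C.designs = biorth ξ true (shiftD ξ i '' N.designs)

/-- `C = ⊕ₖ F k`. -/
def IsSumOf {ξ : Address} {ι : Type} (C : Behaviour ξ true)
    (F : ι → Behaviour ξ true) : Prop :=
  C.designs = biorth ξ true (⋃ k, (F k).designs)

/-- Pairwise disjoint family of positive behaviours (disjoint directories). -/
def PairwiseDisjointFam {ξ : Address} {ι : Type}
    (F : ι → Behaviour ξ true) : Prop :=
  ∀ k l, k ≠ l → ∀ I ∈ directory ξ (F k).designs,
    I ∉ directory ξ (F l).designs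

open Classical in
/-- Tensor of two positive designs on `⊢ ξ`. -/
noncomputable def tensorD (ξ : Address) (D E : Set (List Action)) :
    Set (List Action) :=
  if D = DaiDesign ∨ E = DaiDesign then DaiDesign
  else {c | ∃ I J, firstAction D (Action.proper true ξ I) ∧
      firstAction E (Action.proper true ξ J) ∧
      ∃ t, ((Action.proper true ξ I :: t) ∈ D ∨
            (Action.proper true ξ J :: t) ∈ E) ∧
        c = Action.proper true ξ (I ∪ J) :: t}

/-- `C = A ⊗ B`. -/
def IsTensorOf {ξ : Address} (C A B : Behaviour ξ true) : Prop :=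
  C.designs = biorth ξ true
    {G | ∃ D ∈ A.designs, ∃ E ∈ B.designs, G = tensorD ξ D E}

/-- Hereditary chains of justifiers inside a sequence `p`. -/
inductive JustChain (β : Base) (p : List Action) : List Action → Prop where
  | init {κ} : κ ∈ p → Initial β κ → JustChain β p [κ]
  | cons {s κ κ'} : JustChain β p (s ++ [κ]) → κ' ∈ p → κ.justifies κ' →
      JustChain β p (s ++ [κ, κ'])

/-- Trivial chronicle for a behaviour: hereditary-justifier sequence of an
action of a chronicle of a material design. -/
def TrivialChronicle {ξ : Address} {pos : Bool} (A : Behaviour ξ pos)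
    (s : List Action) : Prop :=
  ∃ D, Material A D ∧ ∃ c ∈ D, JustChain (simpleBase ξ pos) c s

/-- Regular path for a behaviour: reversible path whose justifier chains are
trivial chronicles for the behaviour. -/
def RegularPath {ξ : Address} {pos : Bool} (A : Behaviour ξ pos)
    (p : List Action) : Prop :=
  IsPath (simpleBase ξ pos) p ∧ IsPath (simpleBase ξ !pos) (dualSeq p) ∧
  ∀ κ ∈ p, κ ≠ Action.daimon →
    ∃ s, JustChain (simpleBase ξ pos) p s ∧ s.getLast? = some κ ∧
      TrivialChronicle A s

/-- Regular behaviour: every regular path is visitable. -/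
def Regular {ξ : Address} {pos : Bool} (A : Behaviour ξ pos) : Prop :=
  ∀ p, RegularPath A p → Visitable A p

/-- Proper actions occurring in a design. -/
def properActs (D : Set (List Action)) : Set Action :=
  {a | a ≠ Action.daimon ∧ ∃ c ∈ D, a ∈ c}

/-- Essentially finite behaviour: finitely many material designs, all finite. -/
def EssFinite {ξ : Address} {pos : Bool} (A : Behaviour ξ pos) : Prop :=
  {D | Material A D}.Finite ∧ ∀ D, Material A D → (properActs D).Finite

/-- A slice of a design. -/
def IsSlice (D S : Set (List Action)) : Prop :=
  S ⊆ D ∧ (∀ c ∈ S, ∀ d, d <+: c → d ≠ [] → d ∈ S) ∧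
  ∀ w ξ I₁ I₂, w ++ [Action.proper false ξ I₁] ∈ S →
    w ++ [Action.proper false ξ I₂] ∈ S → I₁ = I₂

/-- Uniformly bounded behaviour: slice sizes of material designs uniformly
bounded. -/
def UnifBounded {ξ : Address} {pos : Bool} (A : Behaviour ξ pos) : Prop :=
  ∃ N : ℕ, ∀ D, Material A D → ∀ S, IsSlice D S →
    (properActs S).Finite ∧ (properActs S).ncard < N

def oneDesign (ξ : Address) : Set (List Action) :=
  {[Action.proper true ξ ∅]}

mutual
  /-- The class `C∞⁺` of positive behaviours: `0`, `1`, or a (possibly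
  infinite) nonempty sum of finite tensors of shifts of `C∞⁻` elements. -/
  inductive CInf : (ξ : Address) → Behaviour ξ true → Prop where
    | zero {ξ} (A : Behaviour ξ true) :
        A.designs = {DaiDesign} → CInf ξ A
    | one {ξ} (A : Behaviour ξ true) :
        A.designs = biorth ξ true {oneDesign ξ} → CInf ξ A
    | sum {ξ} {ι : Type} (F : ι → Behaviour ξ true) (C : Behaviour ξ true) :
        Nonempty ι → (∀ k, CInfTS ξ (F k)) → PairwiseDisjointFam F →
        IsSumOf C F → CInf ξ C
  /-- Finite tensors of positive shifts of duals of `C∞⁺` elements. -/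
  inductive CInfTS : (ξ : Address) → Behaviour ξ true → Prop where
    | shift {ξ} {i : ℕ} (C : Behaviour ξ true) (N : Behaviour (ξ ++ [i]) false)
        (P : Behaviour (ξ ++ [i]) true) :
        CInf (ξ ++ [i]) P → N.designs = orthSet (ξ ++ [i]) true P.designs →
        IsShiftOf ξ i C N → CInfTS ξ C
    | tensor {ξ} (A B C : Behaviour ξ true) :
        CInfTS ξ A → CInfTS ξ B → Alien ξ A B → IsTensorOf C A B →
        CInfTS ξ C
end

mutual
  /-- The class `C_f⁺`: as `C∞⁺` but with finite sums only. -/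
  inductive CFin : (ξ : Address) → Behaviour ξ true → Prop where
    | zero {ξ} (A : Behaviour ξ true) :
        A.designs = {DaiDesign} → CFin ξ A
    | one {ξ} (A : Behaviour ξ true) :
        A.designs = biorth ξ true {oneDesign ξ} → CFin ξ A
    | sum {ξ} {ι : Type} (F : ι → Behaviour ξ true) (C : Behaviour ξ true) :
        Nonempty ι → Finite ι → (∀ k, CFinTS ξ (F k)) → PairwiseDisjointFam F →
        IsSumOf C F → CFin ξ C
  inductive CFinTS : (ξ : Address) → Behaviour ξ true → Prop where
    | shift {ξ} {i : ℕ} (C : Behaviour ξ true) (N : Behaviour (ξ ++ [i]) false)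
        (P : Behaviour (ξ ++ [i]) true) :
        CFin (ξ ++ [i]) P → N.designs = orthSet (ξ ++ [i]) true P.designs →
        IsShiftOf ξ i C N → CFinTS ξ C
    | tensor {ξ} (A B C : Behaviour ξ true) :
        CFinTS ξ A → CFinTS ξ B → Alien ξ A B → IsTensorOf C A B →
        CFinTS ξ C
end

/-- The class `C∞⁻` : duals of `C∞⁺` elements. -/
def CInfN (ξ : Address) (B : Behaviour ξ false) : Prop :=
  ∃ A : Behaviour ξ true, CInf ξ A ∧ B.designs = orthSet ξ true A.designs

def CFinN (ξ : Address) (B : Behaviour ξ false) : Prop :=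
  ∃ A : Behaviour ξ true, CFin ξ A ∧ B.designs = orthSet ξ true A.designs

open List


/-! ### Basic action lemmas -/

@[simp] lemma Action.dual_dual (a : Action) : a.dual.dual = a := by
  cases a <;> simp [Action.dual]

@[simp] lemma Action.dual_daimon : Action.daimon.dual = Action.daimon := rfl

lemma Action.dual_ne_daimon {a : Action} (h : a ≠ .daimon) : a.dual ≠ .daimon := by
  cases a <;> simp_all [Action.dual]

@[simp] lemma Action.isPositive_daimon : Action.daimon.isPositive = true := rfl

lemma Action.isPositive_dual {a : Action} (h : a ≠ .daimon) :
    a.dual.isPositive = !a.isPositive := by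
  cases a <;> simp_all [Action.dual, Action.isPositive]

lemma Action.neg_ne_daimon {a : Action} (h : a.isPositive = false) : a ≠ .daimon := by
  cases a <;> simp_all [Action.isPositive]

lemma Action.neg_dual_pos {a : Action} (h : a.isPositive = false) :
    a.dual.isPositive = true := by
  cases a <;> simp_all [Action.dual, Action.isPositive]

lemma Action.pos_dual_neg {a : Action} (h : a.isPositive = true) (h' : a ≠ .daimon) :
    a.dual.isPositive = false := by
  cases a <;> simp_all [Action.dual, Action.isPositive]

@[simp] lemma Action.focus?_dual (a : Action) : a.dual.focus? = a.focus? := by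
  cases a <;> simp [Action.dual, Action.focus?]

@[simp] lemma Action.justifiesB_dual_left (a b : Action) :
    a.dual.justifiesB b = a.justifiesB b := by
  cases a <;> cases b <;> simp [Action.dual, Action.justifiesB]

@[simp] lemma Action.justifiesB_dual_right (a b : Action) :
    a.justifiesB b.dual = a.justifiesB b := by
  cases a <;> cases b <;> simp [Action.dual, Action.justifiesB]

lemma Action.justifies_dual_left {a b : Action} (h : a.justifies b) : a.dual.justifies b := by
  simpa [Action.justifies] using h

lemma Action.justifies_dual_right {a b : Action} (h : a.justifies b) : a.justifies b.dual := by
  simpa [Action.justifies] using h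

lemma Action.justifiesB_daimon_right (a : Action) : a.justifiesB .daimon = false := by
  cases a <;> rfl

lemma Action.justifiesB_daimon_left (a : Action) : Action.daimon.justifiesB a = false := rfl

@[simp] lemma map_dual_dual (l : List Action) : (l.map Action.dual).map Action.dual = l := by
  simp [List.map_map, Function.comp_def]

/-! ### view lemmas -/

@[simp] lemma viewRevAux_nil : ∀ n, viewRevAux n [] = []
  | 0 => rfl
  | _ + 1 => rfl

lemma viewRevAux_cons_pos {n : ℕ} {a : Action} {w : List Action} (h : a.isPositive = true) :
    viewRevAux (n+1) (a :: w) = a :: viewRevAux n w := by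
  simp [viewRevAux, h]

lemma viewRevAux_cons_neg {n : ℕ} {a : Action} {w : List Action} (h : a.isPositive = false) :
    viewRevAux (n+1) (a :: w) =
      a :: viewRevAux n (w.dropWhile fun b => !b.justifiesB a) := by
  simp [viewRevAux, h]

lemma viewRevAux_fuel : ∀ n m (u : List Action), u.length ≤ n → u.length ≤ m →
    viewRevAux n u = viewRevAux m u := by
  intro n
  induction n with
  | zero => intro m u hu _; rw [List.length_eq_zero_iff.mp (Nat.le_zero.mp hu)]; simp
  | succ n ih =>
    intro m u hu hm
    cases u with
    | nil => simp
    | cons a w =>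
      cases m with
      | zero => simp at hm
      | succ m =>
        simp only [List.length_cons, Nat.succ_le_succ_iff] at hu hm
        cases hp : a.isPositive
        · rw [viewRevAux_cons_neg hp, viewRevAux_cons_neg hp,
            ih m _ (le_trans (List.dropWhile_sublist _).length_le hu)
              (le_trans (List.dropWhile_sublist _).length_le hm)]
        · rw [viewRevAux_cons_pos hp, viewRevAux_cons_pos hp, ih m w hu hm]

lemma viewRevAux_singleton (n : ℕ) (a : Action) (h : 1 ≤ n) :
    viewRevAux n [a] = [a] := by
  cases n with
  | zero => omega
  | succ n =>
    cases hp : a.isPositive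
    · rw [viewRevAux_cons_neg hp]; simp
    · rw [viewRevAux_cons_pos hp]; simp

lemma mem_viewRevAux : ∀ n (u : List Action) x, x ∈ viewRevAux n u → x ∈ u := by
  intro n
  induction n with
  | zero => intro u x h; simp [viewRevAux] at h
  | succ n ih =>
    intro u x h
    cases u with
    | nil => simp at h
    | cons a w =>
      cases hp : a.isPositive
      · rw [viewRevAux_cons_neg hp] at h
        rcases List.mem_cons.mp h with h | h
        · simp [h]
        · exact List.mem_cons_of_mem _ ((List.dropWhile_sublist _).mem (ih _ x h))
      · rw [viewRevAux_cons_pos hp] at h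
        rcases List.mem_cons.mp h with h | h
        · simp [h]
        · exact List.mem_cons_of_mem _ (ih w x h)

/-- The key structural condition allowing to prepend an action `c₀`. Here `w`
is in chronological order: `w₁` is the part strictly before `a`. -/
def GoodFor (c₀ : Action) (w : List Action) : Prop :=
  ∀ w₁ a w₂, w = w₁ ++ a :: w₂ → a.isPositive = false →
    (∀ b ∈ w₁, b.justifiesB a = false) → c₀.justifiesB a = true

lemma viewRevAux_concat (c₀ : Action) : ∀ n (u : List Action), u.length < n →
    (∀ u₁ a u₂, u = u₁ ++ a :: u₂ → a.isPositive = false →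
      (∀ b ∈ u₂, b.justifiesB a = false) → c₀.justifiesB a = true) →
    viewRevAux n (u ++ [c₀]) = viewRevAux n u ++ [c₀] := by
  intro n
  induction n with
  | zero => intro u h; omega
  | succ n ih =>
    intro u hu hcond
    cases u with
    | nil => simpa using viewRevAux_singleton (n+1) c₀ (by omega)
    | cons a t =>
      simp only [List.length_cons, Nat.succ_lt_succ_iff] at hu
      rw [List.cons_append]
      cases hp : a.isPositive
      · rw [viewRevAux_cons_neg hp, viewRevAux_cons_neg hp]
        rcases hdw : List.dropWhile (fun b => !b.justifiesB a) t with _ | ⟨v, vs⟩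
        · have hall : ∀ b ∈ t, b.justifiesB a = false := by
            intro b hb
            have := List.dropWhile_eq_nil_iff.mp hdw b hb
            simpa using this
          have hj : c₀.justifiesB a = true := hcond [] a t rfl hp hall
          rw [List.dropWhile_append]
          simp only [hdw, List.isEmpty_nil, if_true]
          have h1 : List.dropWhile (fun b => !b.justifiesB a) [c₀] = [c₀] := by
            simp [List.dropWhile, hj]
          rw [h1]
          simp [viewRevAux_singleton n c₀ (by omega)]
        · have hcnd : ∀ u₁ b u₂,
              List.dropWhile (fun b => !b.justifiesB a) t = u₁ ++ b :: u₂ →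
              b.isPositive = false → (∀ x ∈ u₂, x.justifiesB b = false) →
              c₀.justifiesB b = true := by
            intro u₁ b u₂ hd hneg hnone
            obtain ⟨pre, hpre⟩ := List.dropWhile_suffix (l := t) (fun b => !b.justifiesB a)
            refine hcond (a :: pre ++ u₁) b u₂ ?_ hneg hnone
            rw [← hpre, hd]; simp
          rw [List.dropWhile_append]
          simp only [hdw, List.isEmpty_cons, if_false, Bool.false_eq_true]
          rw [← hdw, ih (List.dropWhile (fun b => !b.justifiesB a) t)
            (lt_of_le_of_lt (List.dropWhile_sublist _).length_le hu) hcnd]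
          rfl
      · rw [viewRevAux_cons_pos hp, viewRevAux_cons_pos hp,
          ih t hu (fun u₁ b u₂ hd => hcond (a :: u₁) b u₂ (by rw [hd]; rfl))]
        rfl

lemma GoodFor.rev_cond {c₀ : Action} {w : List Action} (h : GoodFor c₀ w) :
    ∀ u₁ a u₂, w.reverse = u₁ ++ a :: u₂ → a.isPositive = false →
      (∀ b ∈ u₂, b.justifiesB a = false) → c₀.justifiesB a = true := by
  intro u₁ a u₂ hdec hneg hnone
  have hw : w = u₂.reverse ++ a :: u₁.reverse := by
    have := congrArg List.reverse hdec
    simpa [List.reverse_append] using this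
  exact h _ a _ hw hneg (by intro b hb; exact hnone b (by simpa using hb))

lemma view_cons {c₀ : Action} {w : List Action} (h : GoodFor c₀ w) :
    view (c₀ :: w) = c₀ :: view w := by
  unfold view viewRev
  rw [List.reverse_cons, List.length_append]
  simp only [List.length_reverse, List.length_cons, List.length_nil]
  rw [viewRevAux_concat c₀ (w.length + 1) w.reverse
    (by simp) (h.rev_cond)]
  rw [viewRevAux_fuel (w.length + 1) w.length w.reverse (by simp) (by simp)]
  simp

@[simp] lemma view_nil : view ([] : List Action) = [] := rfl

lemma view_singleton (a : Action) : view [a] = [a] := by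
  unfold view viewRev
  simp [viewRevAux_singleton]

lemma view_concat (u : List Action) (a : Action) :
    ∃ w, view (u ++ [a]) = w ++ [a] ∧ ∀ x ∈ w, x ∈ u := by
  unfold view viewRev
  rw [List.reverse_append]
  simp only [List.reverse_cons, List.reverse_nil, List.nil_append, List.singleton_append,
    List.length_cons, List.length_append, List.length_reverse]
  cases hp : a.isPositive
  · rw [viewRevAux_cons_neg hp, List.reverse_cons]
    refine ⟨_, rfl, ?_⟩
    intro x hx
    have := mem_viewRevAux _ _ x (by simpa using hx)
    exact (List.mem_reverse).mp ((List.dropWhile_sublist _).mem this)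
  · rw [viewRevAux_cons_pos hp, List.reverse_cons]
    refine ⟨_, rfl, ?_⟩
    intro x hx
    have := mem_viewRevAux _ _ x (by simpa using hx)
    exact (List.mem_reverse).mp this

lemma view_concat_ne_nil (u : List Action) (a : Action) : view (u ++ [a]) ≠ [] := by
  obtain ⟨w, hw, -⟩ := view_concat u a
  simp [hw]

lemma view_ne_nil {u : List Action} (h : u ≠ []) : view u ≠ [] := by
  rcases List.eq_nil_or_concat u with h' | ⟨w, a, rfl⟩
  · exact absurd h' h
  · rw [List.concat_eq_append]; exact view_concat_ne_nil _ _



/-! ### Initial / simple base characterizations -/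

lemma Initial_simple_pos {ζ : Address} {a : Action} :
    Initial (simpleBase ζ true) a ↔ ∃ I, a = .proper true ζ I := by
  constructor
  · rintro ⟨pol, η, I, rfl, σ, hσ, h⟩
    simp only [simpleBase, if_true, List.mem_singleton] at hσ
    subst hσ
    rcases h with ⟨rfl, h⟩ | ⟨rfl, h⟩
    · simp only [Finset.mem_singleton] at h
      exact ⟨I, by rw [h]⟩
    · simp at h
  · rintro ⟨I, rfl⟩
    exact ⟨true, ζ, I, rfl, ⟨none, {ζ}⟩, by simp [simpleBase], Or.inl ⟨rfl, by simp⟩⟩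

lemma Initial_simple_neg {ζ : Address} {a : Action} :
    Initial (simpleBase ζ false) a ↔ ∃ I, a = .proper false ζ I := by
  constructor
  · rintro ⟨pol, η, I, rfl, σ, hσ, h⟩
    simp only [simpleBase, if_false, Bool.false_eq_true, reduceIte, List.mem_singleton] at hσ
    subst hσ
    rcases h with ⟨rfl, h⟩ | ⟨rfl, h⟩
    · simp at h
    · simp only [Option.some.injEq] at h
      exact ⟨I, by rw [h]⟩
  · rintro ⟨I, rfl⟩
    exact ⟨false, ζ, I, rfl, ⟨some ζ, ∅⟩, by simp [simpleBase], Or.inr ⟨rfl, rfl⟩⟩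

lemma simpleBase_pos_isPositive (ζ : Address) : Base.isPositive (simpleBase ζ true) :=
  ⟨⟨none, {ζ}⟩, by simp [simpleBase], rfl⟩

lemma simpleBase_neg_not_isPositive (ζ : Address) : ¬ Base.isPositive (simpleBase ζ false) := by
  rintro ⟨σ, hσ, h⟩
  simp only [simpleBase, Bool.false_eq_true, reduceIte, List.mem_singleton] at hσ
  subst hσ; simp at h

/-! ### justifies lemmas -/

lemma justifies_focus {a b : Action} (h : a.justifies b) :
    ∃ pa Ia pb fb Ib j, a = .proper pa fb Ia ∧ b = .proper pb (fb ++ [j]) Ib ∧ j ∈ Ia := by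
  cases a with
  | daimon => simp [Action.justifies, Action.justifiesB] at h
  | proper pa fa Ia =>
    cases b with
    | daimon => simp [Action.justifies, Action.justifiesB] at h
    | proper pb fb Ib =>
      simp only [Action.justifies, Action.justifiesB, decide_eq_true_eq] at h
      obtain ⟨j, hj, rfl⟩ := h
      exact ⟨pa, Ia, pb, fa, Ib, j, rfl, rfl, hj⟩

lemma k0_justifies_iff {ξ : Address} {i : ℕ} {b : Bool} {a : Action} :
    (Action.proper b ξ {i}).justifies a ↔
      ∃ pb Ib, a = .proper pb (ξ ++ [i]) Ib := by
  constructor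
  · intro h
    obtain ⟨pa, Ia, pb, fb, Ib, j, he, rfl, hj⟩ := justifies_focus h
    cases he
    simp only [Finset.mem_singleton] at hj
    subst hj
    exact ⟨pb, Ib, rfl⟩
  · rintro ⟨pb, Ib, rfl⟩
    simp [Action.justifies, Action.justifiesB]

lemma justifies_of_focus_eq {a b b' : Action} (h : a.justifies b)
    (hf : b'.focus? = b.focus?) (hb' : b' ≠ .daimon) : a.justifies b' := by
  cases a with
  | daimon => simp [Action.justifies, Action.justifiesB] at h
  | proper pa fa Ia =>
    cases b with
    | daimon => simp [Action.justifies, Action.justifiesB] at h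
    | proper pb fb Ib =>
      cases b' with
      | daimon => exact absurd rfl hb'
      | proper pc fc Ic =>
        simp only [Action.focus?, Option.some.injEq] at hf
        subst hf
        simpa [Action.justifies, Action.justifiesB] using h

/-! ### Foci of paths on a simple base -/

lemma Initial_simple {ζ : Address} {pos : Bool} {a : Action}
    (h : Initial (simpleBase ζ pos) a) : ∃ I, a = .proper pos ζ I := by
  cases pos
  · exact Initial_simple_neg.mp h
  · exact Initial_simple_pos.mp h

lemma path_foci_aux {ζ : Address} {pos : Bool} {r : List Action}
    (hr : IsPath (simpleBase ζ pos) r) :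
    ∀ n (u : List Action) a, u.length ≤ n → u ++ [a] <+: r → a ≠ .daimon →
      ∃ f, a.focus? = some f ∧ ζ <+: f := by
  intro n
  induction n with
  | zero =>
    intro u a hu hpre ha
    rw [List.length_eq_zero_iff.mp (Nat.le_zero.mp hu)] at hpre
    rcases hr.justified [] a (by simpa using hpre) ha with hin | ⟨b, hb, _⟩
    · obtain ⟨I, rfl⟩ := Initial_simple hin
      exact ⟨ζ, rfl, List.prefix_refl ζ⟩
    · simp at hb
  | succ n ih =>
    intro u a hu hpre ha
    rcases hr.justified u a hpre ha with hin | ⟨b, hb, hj⟩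
    · obtain ⟨I, rfl⟩ := Initial_simple hin
      exact ⟨ζ, rfl, List.prefix_refl ζ⟩
    · obtain ⟨u₁, u₂, rfl⟩ := List.append_of_mem hb
      have hb_ne : b ≠ .daimon := by
        rintro rfl
        simp [Action.justifies, Action.justifiesB_daimon_left] at hj
      have hlen : u₁.length ≤ n := by
        have := hu
        simp only [List.length_append, List.length_cons] at this
        omega
      have hpre' : u₁ ++ [b] <+: r := by
        refine List.IsPrefix.trans ?_ hpre
        refine ⟨u₂ ++ [a], by simp⟩
      obtain ⟨fb, hfb, hζ⟩ := ih u₁ b hlen hpre' hb_ne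
      obtain ⟨pa, Ia, pb, fb', Ib, j, hbe, hae, hjj⟩ := justifies_focus hj
      subst hbe; subst hae
      refine ⟨fb' ++ [j], rfl, ?_⟩
      simp only [Action.focus?, Option.some.injEq] at hfb
      subst hfb
      exact hζ.trans ⟨[j], rfl⟩

lemma path_foci {ζ : Address} {pos : Bool} {r : List Action}
    (hr : IsPath (simpleBase ζ pos) r) :
    ∀ u a, u ++ [a] <+: r → a ≠ .daimon → ∃ f, a.focus? = some f ∧ ζ <+: f :=
  fun u a => path_foci_aux hr u.length u a le_rfl

/-- Foci in a path on a simple base strictly extend the base address of a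
sub-address base. -/
lemma path_focus_mem {ζ : Address} {pos : Bool} {r : List Action}
    (hr : IsPath (simpleBase ζ pos) r) {a : Action} (hmem : a ∈ r)
    (ha : a ≠ .daimon) : ∃ f, a.focus? = some f ∧ ζ <+: f := by
  obtain ⟨u₁, u₂, rfl⟩ := List.append_of_mem hmem
  exact path_foci hr u₁ a ⟨u₂, by simp⟩ ha



/-! ### decomposition helpers -/

lemma concat_decomp {s w₁ w₂ : List Action} {x a : Action}
    (h : s ++ [x] = w₁ ++ a :: w₂) :
    (w₁ = s ∧ a = x ∧ w₂ = []) ∨ ∃ w₂', w₂ = w₂' ++ [x] ∧ s = w₁ ++ a :: w₂' := by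
  rcases List.append_eq_append_iff.mp h with ⟨a', h1, h2⟩ | ⟨c', h1, h2⟩
  · cases a' with
    | nil =>
      simp only [List.nil_append, List.cons.injEq] at h2
      exact Or.inl ⟨by simpa using h1, h2.1.symm, h2.2.symm⟩
    | cons b a'' =>
      exfalso
      simp only [List.cons_append, List.cons.injEq] at h2
      exact absurd h2.2.symm (by simp)
  · cases c' with
    | nil =>
      simp only [List.nil_append, List.cons.injEq] at h2
      exact Or.inl ⟨by simpa using h1.symm, h2.1, h2.2⟩
    | cons b c'' =>
      simp only [List.cons_append, List.cons.injEq] at h2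
      obtain ⟨rfl, rfl⟩ := h2
      exact Or.inr ⟨c'', rfl, by simpa using h1⟩

lemma prefix_cons_cases {t l : List Action} {a : Action} (h : t <+: a :: l) :
    t = [] ∨ ∃ t', t = a :: t' ∧ t' <+: l := by
  cases t with
  | nil => exact Or.inl rfl
  | cons b t' =>
    obtain ⟨r, hr⟩ := h
    simp only [List.cons_append, List.cons.injEq] at hr
    exact Or.inr ⟨t', by rw [hr.1], ⟨r, hr.2⟩⟩

/-! ### The hereditary-justification invariant -/

/-- Every non-daimon action of `s` is justified by an earlier action of `s`,
or has focus `ζ'`. -/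
def JustI (ζ' : Address) (s : List Action) : Prop :=
  ∀ s₁ a s₂, s = s₁ ++ a :: s₂ → a ≠ .daimon →
    (∃ b ∈ s₁, b.justifies a) ∨ a.focus? = some ζ'

lemma justI_nil (ζ' : Address) : JustI ζ' [] := by
  intro s₁ a s₂ h
  simp at h

lemma justI_map_dual {ζ' : Address} {s : List Action} (h : JustI ζ' s) :
    JustI ζ' (s.map Action.dual) := by
  intro s₁ a s₂ hdec ha
  have hs : s = s₁.map Action.dual ++ a.dual :: s₂.map Action.dual := by
    have := congrArg (List.map Action.dual) hdec
    simpa [Function.comp_def] using this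
  rcases h _ _ _ hs (Action.dual_ne_daimon ha) with ⟨b, hb, hj⟩ | hf
  · refine Or.inl ⟨b.dual, ?_, ?_⟩
    · obtain ⟨c, hc, rfl⟩ := List.mem_map.mp hb
      simpa using hc
    · simpa [Action.justifies] using hj
  · exact Or.inr (by simpa using hf)

lemma justI_concat {ζ' : Address} {s : List Action} {x : Action} (h : JustI ζ' s)
    (hx : (∃ b ∈ s, b.justifies x) ∨ x.focus? = some ζ' ∨ x = .daimon) :
    JustI ζ' (s ++ [x]) := by
  intro s₁ a s₂ hdec ha
  rcases concat_decomp hdec with ⟨rfl, rfl, rfl⟩ | ⟨w₂', rfl, hs⟩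
  · rcases hx with h' | h' | h'
    · exact Or.inl h'
    · exact Or.inr h'
    · exact absurd h' ha
  · exact h _ _ _ hs ha

lemma goodFor_of_justI {c₀ : Action} {ζ' : Address} {s : List Action}
    (h : JustI ζ' s)
    (hc : ∀ a : Action, a.focus? = some ζ' → a ≠ .daimon → c₀.justifiesB a = true) :
    GoodFor c₀ s := by
  intro w₁ a w₂ hdec hneg hnone
  rcases h _ _ _ hdec (Action.neg_ne_daimon hneg) with ⟨b, hb, hj⟩ | hf
  · exact absurd hj (by simp [Action.justifies, hnone b hb])
  · exact hc a hf (Action.neg_ne_daimon hneg)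

lemma kb_justifies_focus {ξ : Address} {i : ℕ} {b : Bool} :
    ∀ a : Action, a.focus? = some (ξ ++ [i]) → a ≠ .daimon →
      (Action.proper b ξ {i}).justifiesB a = true := by
  intro a hf ha
  cases a with
  | daimon => exact absurd rfl ha
  | proper pb fb Ib =>
    simp only [Action.focus?, Option.some.injEq] at hf
    subst hf
    simp [Action.justifiesB]

/-- A path on a simple base satisfies the invariant. -/
lemma justI_of_path {ζ' : Address} {pos : Bool} {r w : List Action}
    (hr : IsPath (simpleBase ζ' pos) r) (hw : w <+: r) : JustI ζ' w := by
  intro s₁ a s₂ hdec ha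
  have hpre : s₁ ++ [a] <+: r := by
    refine List.IsPrefix.trans ?_ hw
    rw [hdec]
    exact ⟨s₂, by simp⟩
  rcases hr.justified s₁ a hpre ha with hin | ⟨b, hb, hj⟩
  · obtain ⟨I, rfl⟩ := Initial_simple hin
    exact Or.inr rfl
  · exact Or.inl ⟨b, hb, hj⟩

/-! ### dualSeq lemmas -/

lemma dualSeq_nil : dualSeq [] = [.daimon] := by
  simp [dualSeq]

lemma dualSeq_cons {a : Action} {q : List Action} (ha : a ≠ .daimon) :
    dualSeq (a :: q) = a.dual :: dualSeq q := by
  cases q with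
  | nil =>
    have : ([a].getLast? = some Action.daimon) = False := by
      simp only [List.getLast?_singleton, Option.some.injEq, eq_iff_iff, iff_false]
      exact fun h => ha h
    simp [dualSeq, this, ha]
  | cons b t =>
    have hlast : (a :: b :: t).getLast? = (b :: t).getLast? := rfl
    by_cases hd : (b :: t).getLast? = some Action.daimon
    · simp [dualSeq, hlast, hd]
    · simp [dualSeq, hlast, hd]

lemma dualSeq_ne_nil {q : List Action} (hq : ∀ a, q.head? = some a → a ≠ .daimon) :
    dualSeq q ≠ [] := by
  cases q with
  | nil => simp [dualSeq_nil]
  | cons a t =>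
    rw [dualSeq_cons (hq a rfl)]
    simp

/-! ### justifier extraction from design membership -/

lemma view_concat_mem_design {β : Base} {G : Set (List Action)} {u : List Action} {a : Action}
    (hG : IsDesign β G) (hmem : view (u ++ [a]) ∈ G) (ha : a ≠ .daimon) :
    Initial β a ∨ ∃ b ∈ u, b.justifies a := by
  obtain ⟨w, hw, hsub⟩ := view_concat u a
  have hc := ((hG.chron _ hmem).1).justified w a (by rw [← hw]) ha
  rcases hc with h | ⟨b, hb, hj⟩
  · exact Or.inl h
  · exact Or.inr ⟨b, hsub b hb, hj⟩



variable {ξ : Address} {i : ℕ}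

/-! ### helpers -/

lemma concat_prefix_cons {w q : List Action} {a c₀ : Action}
    (h : w ++ [a] <+: c₀ :: q) :
    (w = [] ∧ a = c₀) ∨ ∃ w', w = c₀ :: w' ∧ w' ++ [a] <+: q := by
  cases w with
  | nil =>
    obtain ⟨r, hr⟩ := h
    simp only [List.nil_append, List.singleton_append, List.cons.injEq] at hr
    exact Or.inl ⟨rfl, hr.1⟩
  | cons b w' =>
    obtain ⟨r, hr⟩ := h
    simp only [List.cons_append, List.cons.injEq] at hr
    exact Or.inr ⟨w', by rw [hr.1], ⟨r, hr.2⟩⟩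

lemma cons_prefix_cons' {l₁ l₂ : List Action} {a : Action} (h : l₁ <+: l₂) :
    a :: l₁ <+: a :: l₂ := by
  obtain ⟨r, hr⟩ := h
  exact ⟨r, by rw [← hr]; rfl⟩

lemma prefix_drop_last {w : List Action} {a : Action} {q : List Action}
    (h : w ++ [a] <+: q) : w <+: q :=
  (List.prefix_append w [a]).trans h

lemma mem_of_concat_prefix {w : List Action} {a : Action} {q : List Action}
    (h : w ++ [a] <+: q) : a ∈ q :=
  h.subset (by simp)

lemma focus_not_mem_tail' {c₀ : Action} {q : List Action} {f : Address}
    (hlin : ((c₀ :: q).filterMap Action.focus?).Nodup) (hf : c₀.focus? = some f) :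
    ∀ a ∈ q, a.focus? ≠ some f := by
  rw [List.filterMap_cons_some hf, List.nodup_cons] at hlin
  intro a ha hfa
  exact hlin.1 (List.mem_filterMap.mpr ⟨a, ha, hfa⟩)

lemma focus_not_mem_tail {β : Base} {c₀ : Action} {q : List Action} {f : Address}
    (h : IsPath β (c₀ :: q)) (hf : c₀.focus? = some f) :
    ∀ a ∈ q, a.focus? ≠ some f :=
  focus_not_mem_tail' h.linearity hf

lemma kb_ne_daimon (b : Bool) : (Action.proper b ξ {i} : Action) ≠ .daimon := by
  simp

@[simp] lemma kb_focus (b : Bool) : (Action.proper b ξ {i} : Action).focus? = some ξ := rfl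

@[simp] lemma kb_isPositive (b : Bool) : (Action.proper b ξ {i} : Action).isPositive = b := rfl

lemma not_prefix_addr : ¬ (ξ ++ [i] <+: ξ) := by
  intro h
  have := h.length_le
  simp at this

/-- Tails of a path prefixed by an action of focus `ξ` and ramification `{i}`
satisfy the hereditary-justification invariant w.r.t. `ξ ++ [i]`. -/
lemma justI_of_path_cons {b b' : Bool} {q w : List Action}
    (h : IsPath (simpleBase ξ b') ((Action.proper b ξ {i}) :: q)) (hw : w <+: q) :
    JustI (ξ ++ [i]) w := by
  intro s₁ x s₂ hdec hx
  have hs₁x : s₁ ++ [x] <+: q := by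
    refine List.IsPrefix.trans ?_ hw
    rw [hdec]; exact ⟨s₂, by simp⟩
  have hpre : (Action.proper b ξ {i} :: s₁) ++ [x] <+: (Action.proper b ξ {i}) :: q := by
    rw [List.cons_append]
    exact cons_prefix_cons' hs₁x
  have hxq : x ∈ q := mem_of_concat_prefix hs₁x
  rcases h.justified _ x hpre hx with hin | ⟨c, hc, hj⟩
  · obtain ⟨I, rfl⟩ := Initial_simple hin
    exact absurd rfl (focus_not_mem_tail h (kb_focus b) _ hxq)
  · rcases List.mem_cons.mp hc with rfl | hc
    · obtain ⟨px, Ix, rfl⟩ := k0_justifies_iff.mp hj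
      exact Or.inr rfl
    · exact Or.inl ⟨c, hc, hj⟩

lemma view_cons_k {b : Bool} {w : List Action} (hJ : JustI (ξ ++ [i]) w) :
    view (Action.proper b ξ {i} :: w) = Action.proper b ξ {i} :: view w :=
  view_cons (goodFor_of_justI hJ kb_justifies_focus)

lemma foci_extend_not_base {pos : Bool} {r : List Action}
    (hr : IsPath (simpleBase (ξ ++ [i]) pos) r) :
    ∀ a ∈ r, a.focus? ≠ some ξ := by
  intro a ha hf
  have ha' : a ≠ .daimon := by rintro rfl; simp [Action.focus?] at hf
  obtain ⟨f, hf', hpre⟩ := path_focus_mem hr ha ha'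
  rw [hf] at hf'
  cases hf'
  exact not_prefix_addr hpre

/-! ### path transfer : positive shift prefix, cons direction -/

lemma shift_head_neg {q : List Action} {a : Action} {t : List Action}
    (hq : IsPath (simpleBase (ξ ++ [i]) false) q) (hqe : q = a :: t) :
    ∃ I, a = .proper false (ξ ++ [i]) I := by
  subst hqe
  by_cases hd : a = .daimon
  · exact absurd (hq.daimonFirst (by rw [hd]; rfl)) (simpleBase_neg_not_isPositive _)
  · rcases hq.justified [] a ⟨t, rfl⟩ hd with hin | ⟨c, hc, _⟩
    · exact Initial_simple_neg.mp hin
    · simp at hc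

lemma isPath_shift_cons {q : List Action}
    (hq : IsPath (simpleBase (ξ ++ [i]) false) q) :
    IsPath (simpleBase ξ true) (Action.proper true ξ {i} :: q) := by
  refine ⟨?_, ?_, ?_, ?_, ?_, ?_, ?_, ?_⟩
  · cases q with
    | nil => simp [List.Chain']
    | cons a t =>
      simp only [List.Chain', List.isChain_cons_cons]
      refine ⟨?_, hq.alternating⟩
      obtain ⟨I, rfl⟩ := shift_head_neg hq rfl
      simp [Action.isPositive]
  · intro w a hpre ha
    rcases concat_prefix_cons hpre with ⟨rfl, rfl⟩ | ⟨w', rfl, hp'⟩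
    · exact Or.inl (Initial_simple_pos.mpr ⟨{i}, rfl⟩)
    · rcases hq.justified w' a hp' ha with hin | ⟨c, hc, hj⟩
      · obtain ⟨I, rfl⟩ := Initial_simple_neg.mp hin
        exact Or.inr ⟨_, List.mem_cons_self, k0_justifies_iff.mpr ⟨false, I, rfl⟩⟩
      · exact Or.inr ⟨c, List.mem_cons_of_mem _ hc, hj⟩
  · intro w a b hpre hpos hb hj
    rcases concat_prefix_cons hpre with ⟨rfl, rfl⟩ | ⟨w', rfl, hp'⟩
    · simp at hb
    · rw [view_cons_k (justI_of_path hq (prefix_drop_last hp'))]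
      rcases List.mem_cons.mp hb with rfl | hb'
      · exact List.mem_cons_self
      · exact List.mem_cons_of_mem _ (hq.negJump w' a b hp' hpos hb' hj)
  · intro w a hpre hpos hne σ hσ hex
    obtain ⟨f, hf, hfr⟩ := hex
    simp only [simpleBase, if_true, List.mem_singleton] at hσ
    subst hσ
    simp only [Finset.mem_singleton] at hfr
    subst hfr
    rcases concat_prefix_cons hpre with ⟨rfl, rfl⟩ | ⟨w', rfl, hp'⟩
    · exact Or.inl ⟨rfl, rfl⟩
    · exact absurd hf (foci_extend_not_base hq a (mem_of_concat_prefix hp'))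
  · rw [List.filterMap_cons_some (kb_focus true), List.nodup_cons]
    refine ⟨?_, hq.linearity⟩
    intro hmem
    obtain ⟨a, ha, hfa⟩ := List.mem_filterMap.mp hmem
    exact foci_extend_not_base hq a ha hfa
  · intro w hpre
    rcases concat_prefix_cons hpre with ⟨rfl, h⟩ | ⟨w', rfl, hp'⟩
    · exact absurd h.symm (kb_ne_daimon true)
    · rw [List.cons_append, hq.daimonLast w' hp']
  · intro _
    exact simpleBase_pos_isPositive ξ
  · intro _
    exact ⟨_, q, rfl, Or.inr ⟨rfl, Initial_simple_pos.mpr ⟨{i}, rfl⟩⟩⟩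

/-! ### path transfer : positive shift prefix, uncons direction -/

lemma isPath_shift_uncons {q : List Action}
    (h : IsPath (simpleBase ξ true) (Action.proper true ξ {i} :: q)) :
    IsPath (simpleBase (ξ ++ [i]) false) q := by
  have hfocus : ∀ a ∈ q, a.focus? ≠ some ξ := focus_not_mem_tail h (kb_focus true)
  have hhead : ∀ a t, q = a :: t →
      (a.isPositive = false ∧ ∃ I, a = .proper false (ξ ++ [i]) I) := by
    intro a t hqe
    subst hqe
    have halt := h.alternating
    simp only [List.Chain', List.isChain_cons_cons] at halt
    have hneg : a.isPositive = false := by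
      cases hh : a.isPositive
      · rfl
      · exact absurd (by simp [hh] : (Action.proper true ξ {i}).isPositive = a.isPositive)
          halt.1
    have ha' : a ≠ .daimon := Action.neg_ne_daimon hneg
    rcases h.justified [Action.proper true ξ {i}] a ⟨t, rfl⟩ ha' with hin | ⟨c, hc, hj⟩
    · obtain ⟨I, heq⟩ := Initial_simple hin
      rw [heq] at hneg
      simp [Action.isPositive] at hneg
    · rcases List.mem_cons.mp hc with rfl | hc
      · obtain ⟨pa, Ia, heq⟩ := k0_justifies_iff.mp hj
        rw [heq] at hneg ⊢
        simp only [Action.isPositive] at hneg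
        subst hneg
        exact ⟨rfl, Ia, rfl⟩
      · simp at hc
  have hheadf : ∀ w a, w ++ [a] <+: q → a.focus? = some (ξ ++ [i]) → w = [] := by
    intro w a hpre hfa
    cases w with
    | nil => rfl
    | cons a' w' =>
      exfalso
      obtain ⟨r, hr⟩ := hpre
      have hq : q = a' :: (w' ++ [a] ++ r) := by rw [← hr]; simp
      obtain ⟨-, I, heq⟩ := hhead a' _ hq
      have hlin : ((a' :: (w' ++ [a] ++ r)).filterMap Action.focus?).Nodup := by
        have hl := h.linearity
        rw [List.filterMap_cons_some (kb_focus true), List.nodup_cons, hq] at hl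
        exact hl.2
      exact focus_not_mem_tail' hlin (by rw [heq]; rfl) a (by simp) hfa
  have hJ : ∀ w, w <+: q → JustI (ξ ++ [i]) w :=
    fun w hw => justI_of_path_cons (b := true) (b' := true) h hw
  refine ⟨?_, ?_, ?_, ?_, ?_, ?_, ?_, ?_⟩
  · exact h.alternating.tail
  · intro w a hpre ha
    have hbig : (Action.proper true ξ {i} :: w) ++ [a] <+: Action.proper true ξ {i} :: q := by
      rw [List.cons_append]; exact cons_prefix_cons' hpre
    rcases h.justified _ a hbig ha with hin | ⟨c, hc, hj⟩
    · obtain ⟨I, rfl⟩ := Initial_simple hin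
      exact absurd rfl (hfocus _ (mem_of_concat_prefix hpre))
    · rcases List.mem_cons.mp hc with rfl | hc
      · obtain ⟨pa, Ia, heq⟩ := k0_justifies_iff.mp hj
        have hw : w = [] := hheadf w _ hpre (by rw [heq]; rfl)
        subst hw
        obtain ⟨r, hr⟩ := hpre
        have hq : q = a :: r := by rw [← hr]; simp
        obtain ⟨-, I, heq'⟩ := hhead a _ hq
        rw [heq']
        exact Or.inl (Initial_simple_neg.mpr ⟨I, rfl⟩)
      · exact Or.inr ⟨c, hc, hj⟩
  · intro w a b hpre hpos hb hj
    have hbig : (Action.proper true ξ {i} :: w) ++ [a] <+: Action.proper true ξ {i} :: q := by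
      rw [List.cons_append]; exact cons_prefix_cons' hpre
    have hv := h.negJump _ a b hbig hpos (List.mem_cons_of_mem _ hb) hj
    rw [view_cons_k (hJ w (prefix_drop_last hpre))] at hv
    rcases List.mem_cons.mp hv with rfl | hv'
    · exact absurd rfl (hfocus _ ((prefix_drop_last hpre).subset hb))
    · exact hv'
  · intro w a hpre hpos hne σ hσ hex
    obtain ⟨f, hf, hfr⟩ := hex
    simp only [simpleBase, Bool.false_eq_true, reduceIte, List.mem_singleton] at hσ
    subst hσ
    simp at hfr
  · have hl := h.linearity
    rw [List.filterMap_cons_some (kb_focus true), List.nodup_cons] at hl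
    exact hl.2
  · intro w hpre
    have hbig : (Action.proper true ξ {i} :: w) ++ [Action.daimon] <+:
        Action.proper true ξ {i} :: q := by
      rw [List.cons_append]; exact cons_prefix_cons' hpre
    have hd := h.daimonLast _ hbig
    rw [List.cons_append] at hd
    exact (List.cons_eq_cons.mp hd).2
  · intro hd
    exfalso
    cases q with
    | nil => simp at hd
    | cons a' t =>
      simp only [List.head?_cons, Option.some.injEq] at hd
      obtain ⟨hneg, -⟩ := hhead a' t rfl
      rw [hd] at hneg
      simp [Action.isPositive] at hneg
  · intro hpos
    exact absurd hpos (simpleBase_neg_not_isPositive _)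



variable {ξ : Address} {i : ℕ}

/-! ### path transfer : negative adapter prefix, cons direction -/

lemma ad_head_pos {r : List Action} {a : Action} {t : List Action}
    (hr : IsPath (simpleBase (ξ ++ [i]) true) r) (hre : r = a :: t) :
    a.isPositive = true := by
  obtain ⟨a', t', heq, hdisj⟩ := hr.totality (simpleBase_pos_isPositive _)
  rw [hre] at heq
  obtain ⟨rfl, rfl⟩ := List.cons_eq_cons.mp heq
  rcases hdisj with rfl | ⟨hp, -⟩
  · rfl
  · exact hp

lemma isPath_ad_cons {r : List Action}
    (hr : IsPath (simpleBase (ξ ++ [i]) true) r) :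
    IsPath (simpleBase ξ false) (Action.proper false ξ {i} :: r) := by
  refine ⟨?_, ?_, ?_, ?_, ?_, ?_, ?_, ?_⟩
  · cases r with
    | nil => simp [List.Chain']
    | cons a t =>
      simp only [List.Chain', List.isChain_cons_cons]
      exact ⟨by simp [ad_head_pos hr rfl], hr.alternating⟩
  · intro w a hpre ha
    rcases concat_prefix_cons hpre with ⟨rfl, rfl⟩ | ⟨w', rfl, hp'⟩
    · exact Or.inl (Initial_simple_neg.mpr ⟨{i}, rfl⟩)
    · rcases hr.justified w' a hp' ha with hin | ⟨c, hc, hj⟩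
      · obtain ⟨I, rfl⟩ := Initial_simple_pos.mp hin
        exact Or.inr ⟨_, List.mem_cons_self, k0_justifies_iff.mpr ⟨true, I, rfl⟩⟩
      · exact Or.inr ⟨c, List.mem_cons_of_mem _ hc, hj⟩
  · intro w a b hpre hpos hb hj
    rcases concat_prefix_cons hpre with ⟨rfl, rfl⟩ | ⟨w', rfl, hp'⟩
    · simp at hb
    · rw [view_cons_k (justI_of_path hr (prefix_drop_last hp'))]
      rcases List.mem_cons.mp hb with rfl | hb'
      · exact List.mem_cons_self
      · exact List.mem_cons_of_mem _ (hr.negJump w' a b hp' hpos hb' hj)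
  · intro w a hpre hpos hne σ hσ hex
    obtain ⟨f, hf, hfr⟩ := hex
    simp only [simpleBase, Bool.false_eq_true, reduceIte, List.mem_singleton] at hσ
    subst hσ
    simp at hfr
  · rw [List.filterMap_cons_some (kb_focus false), List.nodup_cons]
    refine ⟨?_, hr.linearity⟩
    intro hmem
    obtain ⟨a, ha, hfa⟩ := List.mem_filterMap.mp hmem
    exact foci_extend_not_base hr a ha hfa
  · intro w hpre
    rcases concat_prefix_cons hpre with ⟨rfl, hh⟩ | ⟨w', rfl, hp'⟩
    · exact absurd hh.symm (kb_ne_daimon false)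
    · rw [List.cons_append, hr.daimonLast w' hp']
  · intro hd
    exfalso
    simp only [List.head?_cons, Option.some.injEq] at hd
    exact (kb_ne_daimon false) hd
  · intro hpos
    exact absurd hpos (simpleBase_neg_not_isPositive _)

/-! ### path transfer : negative adapter prefix, uncons direction -/

lemma isPath_ad_uncons {r : List Action}
    (h : IsPath (simpleBase ξ false) (Action.proper false ξ {i} :: r))
    (hne : r ≠ []) :
    IsPath (simpleBase (ξ ++ [i]) true) r := by
  have hfocus : ∀ a ∈ r, a.focus? ≠ some ξ := focus_not_mem_tail h (kb_focus false)
  have hhead : ∀ a t, r = a :: t →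
      a = .daimon ∨ (a.isPositive = true ∧ ∃ I, a = .proper true (ξ ++ [i]) I) := by
    intro a t hre
    subst hre
    have halt := h.alternating
    simp only [List.Chain', List.isChain_cons_cons] at halt
    have hpos : a.isPositive = true := by
      cases hh : a.isPositive
      · exact absurd (by simp [hh] :
          (Action.proper false ξ {i}).isPositive = a.isPositive) halt.1
      · rfl
    by_cases hd : a = .daimon
    · exact Or.inl hd
    · rcases h.justified [Action.proper false ξ {i}] a ⟨t, rfl⟩ hd with hin | ⟨c, hc, hj⟩
      · obtain ⟨I, heq⟩ := Initial_simple hin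
        rw [heq] at hpos
        simp [Action.isPositive] at hpos
      · rcases List.mem_cons.mp hc with rfl | hc
        · obtain ⟨pa, Ia, heq⟩ := k0_justifies_iff.mp hj
          rw [heq] at hpos ⊢
          simp only [Action.isPositive] at hpos
          subst hpos
          exact Or.inr ⟨rfl, Ia, rfl⟩
        · simp at hc
  have hdaim : ∀ t, r = Action.daimon :: t → r = [Action.daimon] := by
    intro t hre
    have hpre : [Action.proper false ξ {i}] ++ [Action.daimon] <+:
        Action.proper false ξ {i} :: r := by
      rw [hre]; exact ⟨t, rfl⟩
    have := h.daimonLast _ hpre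
    exact (List.cons_eq_cons.mp this).2.symm
  have hheadf : ∀ w a, w ++ [a] <+: r → a.focus? = some (ξ ++ [i]) → w = [] := by
    intro w a hpre hfa
    cases w with
    | nil => rfl
    | cons a' w' =>
      exfalso
      obtain ⟨s, hs⟩ := hpre
      have hre : r = a' :: (w' ++ [a] ++ s) := by rw [← hs]; simp
      rcases hhead a' _ hre with rfl | ⟨-, I, heq⟩
      · have := hdaim _ hre
        rw [this] at hre
        simp only [List.cons_eq_cons] at hre
        exact absurd hre.2.symm (by simp)
      · have hlin : ((a' :: (w' ++ [a] ++ s)).filterMap Action.focus?).Nodup := by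
          have hl := h.linearity
          rw [List.filterMap_cons_some (kb_focus false), List.nodup_cons, hre] at hl
          exact hl.2
        exact focus_not_mem_tail' hlin (by rw [heq]; rfl) a (by simp) hfa
  have hJ : ∀ w, w <+: r → JustI (ξ ++ [i]) w :=
    fun w hw => justI_of_path_cons (b := false) (b' := false) h hw
  refine ⟨?_, ?_, ?_, ?_, ?_, ?_, ?_, ?_⟩
  · exact h.alternating.tail
  · intro w a hpre ha
    have hbig : (Action.proper false ξ {i} :: w) ++ [a] <+:
        Action.proper false ξ {i} :: r := by
      rw [List.cons_append]; exact cons_prefix_cons' hpre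
    rcases h.justified _ a hbig ha with hin | ⟨c, hc, hj⟩
    · obtain ⟨I, rfl⟩ := Initial_simple hin
      exact absurd rfl (hfocus _ (mem_of_concat_prefix hpre))
    · rcases List.mem_cons.mp hc with rfl | hc
      · obtain ⟨pa, Ia, heq⟩ := k0_justifies_iff.mp hj
        have hw : w = [] := hheadf w _ hpre (by rw [heq]; rfl)
        subst hw
        obtain ⟨s, hs⟩ := hpre
        have hre : r = a :: s := by rw [← hs]; simp
        rcases hhead a _ hre with rfl | ⟨-, I, heq'⟩
        · exact absurd rfl ha
        · rw [heq']
          exact Or.inl (Initial_simple_pos.mpr ⟨I, rfl⟩)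
      · exact Or.inr ⟨c, hc, hj⟩
  · intro w a b hpre hpos hb hj
    have hbig : (Action.proper false ξ {i} :: w) ++ [a] <+:
        Action.proper false ξ {i} :: r := by
      rw [List.cons_append]; exact cons_prefix_cons' hpre
    have hv := h.negJump _ a b hbig hpos (List.mem_cons_of_mem _ hb) hj
    rw [view_cons_k (hJ w (prefix_drop_last hpre))] at hv
    rcases List.mem_cons.mp hv with rfl | hv'
    · exact absurd rfl (hfocus _ ((prefix_drop_last hpre).subset hb))
    · exact hv'
  · intro w a hpre hpos hne' σ hσ hex
    obtain ⟨f, hf, hfr⟩ := hex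
    simp only [simpleBase, if_true, List.mem_singleton] at hσ
    subst hσ
    simp only [Finset.mem_singleton] at hfr
    subst hfr
    exact Or.inl ⟨hheadf w a hpre hf, rfl⟩
  · have hl := h.linearity
    rw [List.filterMap_cons_some (kb_focus false), List.nodup_cons] at hl
    exact hl.2
  · intro w hpre
    have hbig : (Action.proper false ξ {i} :: w) ++ [Action.daimon] <+:
        Action.proper false ξ {i} :: r := by
      rw [List.cons_append]; exact cons_prefix_cons' hpre
    have hd := h.daimonLast _ hbig
    rw [List.cons_append] at hd
    exact (List.cons_eq_cons.mp hd).2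
  · intro _
    exact simpleBase_pos_isPositive _
  · intro _
    cases r with
    | nil => exact absurd rfl hne
    | cons a t =>
      rcases hhead a t rfl with rfl | ⟨hp, I, heq⟩
      · exact ⟨_, t, rfl, Or.inl rfl⟩
      · exact ⟨a, t, rfl, Or.inr ⟨hp, by rw [heq]; exact Initial_simple_pos.mpr ⟨I, rfl⟩⟩⟩



variable {ξ : Address} {i : ℕ}

/-! ### prefixing and unprefixing designs -/

def prefD (a : Action) (D : Set (List Action)) : Set (List Action) :=
  insert [a] {c | ∃ d ∈ D, c = a :: d}

def unpref (a : Action) (D : Set (List Action)) : Set (List Action) :=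
  {c | c ≠ [] ∧ a :: c ∈ D}

lemma shiftD_eq (ξ : Address) (i : ℕ) (D : Set (List Action)) :
    shiftD ξ i D = prefD (Action.proper true ξ {i}) D := rfl

lemma not_prefix_two2 {w : List Action} {a b c : Action} :
    ¬ (w ++ [a, b] <+: [c]) := by
  intro h
  have := h.length_le
  simp only [List.length_append, List.length_cons, List.length_singleton,
    List.length_nil] at this
  omega

lemma unpref_prefD_eq {a : Action} {D : Set (List Action)} (hD : ∀ c ∈ D, c ≠ []) :
    unpref a (prefD a D) = D := by
  ext c
  constructor
  · rintro ⟨hne, hmem⟩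
    rcases hmem with h | ⟨d, hd, hdc⟩
    · simp only [List.cons_eq_cons] at h
      exact absurd h.2 hne
    · obtain ⟨-, rfl⟩ := List.cons_eq_cons.mp hdc
      exact hd
  · intro hc
    exact ⟨hD c hc, Or.inr ⟨c, hc, rfl⟩⟩

/-! ### length helpers -/

lemma not_prefix_two {w w₁ : List Action} {x σ₁ a : Action} :
    ¬ (w ++ x :: w₁ ++ [σ₁] <+: [a]) := by
  intro h
  have := h.length_le
  simp only [List.length_append, List.length_cons, List.length_singleton] at this
  omega

lemma middle_prefix_cons {w w₁ q : List Action} {x σ₁ c₀ : Action}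
    (h : w ++ x :: w₁ ++ [σ₁] <+: c₀ :: q) :
    (w = [] ∧ x = c₀ ∧ w₁ ++ [σ₁] <+: q) ∨
      ∃ w', w = c₀ :: w' ∧ w' ++ x :: w₁ ++ [σ₁] <+: q := by
  cases w with
  | nil =>
    obtain ⟨r, hr⟩ := h
    simp only [List.nil_append, List.cons_append, List.cons.injEq] at hr
    exact Or.inl ⟨rfl, hr.1, ⟨r, hr.2⟩⟩
  | cons b w' =>
    obtain ⟨r, hr⟩ := h
    simp only [List.cons_append, List.cons.injEq] at hr
    exact Or.inr ⟨w', by rw [hr.1], ⟨r, by simpa using hr.2⟩⟩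

lemma concat2_prefix_cons {w q : List Action} {a b c₀ : Action}
    (h : w ++ [a, b] <+: c₀ :: q) :
    (w = [] ∧ a = c₀ ∧ ∃ t, q = b :: t) ∨
      ∃ w', w = c₀ :: w' ∧ w' ++ [a, b] <+: q := by
  cases w with
  | nil =>
    obtain ⟨r, hr⟩ := h
    simp only [List.nil_append, List.cons_append, List.cons.injEq] at hr
    exact Or.inl ⟨rfl, hr.1, r, hr.2.symm ▸ rfl⟩
  | cons e w' =>
    obtain ⟨r, hr⟩ := h
    simp only [List.cons_append, List.cons.injEq] at hr
    exact Or.inr ⟨w', by rw [hr.1], ⟨r, hr.2⟩⟩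

/-! ### empty and singleton paths / chronicles -/

lemma isPath_nil_neg (ζ : Address) : IsPath (simpleBase ζ false) [] := by
  refine ⟨by simp [List.Chain'], ?_, ?_, ?_, by simp, ?_, ?_, ?_⟩
  · intro w a h
    have := h.length_le
    simp at this
  · intro w a b h
    have := h.length_le
    simp at this
  · intro w a h
    have := h.length_le
    simp at this
  · intro w h
    have := h.length_le
    simp at this
  · intro h; simp at h
  · intro h; exact absurd h (simpleBase_neg_not_isPositive _)

lemma isPath_single_kp : IsPath (simpleBase ξ true) [Action.proper true ξ {i}] :=
  isPath_shift_cons (isPath_nil_neg _)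

lemma chron_single_kp : IsChronicle (simpleBase ξ true) [Action.proper true ξ {i}] :=
  ⟨isPath_single_kp, by simp, fun w a b h _ => absurd h (by
    intro h'
    have := h'.length_le
    simp only [List.length_append, List.length_cons, List.length_singleton] at this
    omega)⟩

lemma isPath_single_kn : IsPath (simpleBase ξ false) [Action.proper false ξ {i}] := by
  refine ⟨by simp [List.Chain'], ?_, ?_, ?_, by simp [Action.focus?], ?_, ?_, ?_⟩
  · intro w a hpre ha
    rcases concat_prefix_cons hpre with ⟨rfl, rfl⟩ | ⟨w', rfl, hp'⟩
    · exact Or.inl (Initial_simple_neg.mpr ⟨{i}, rfl⟩)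
    · exact absurd hp'.length_le (by simp)
  · intro w a b hpre hpos hb hj
    rcases concat_prefix_cons hpre with ⟨rfl, rfl⟩ | ⟨w', rfl, hp'⟩
    · simp at hb
    · exact absurd hp'.length_le (by simp)
  · intro w a hpre hpos hne σ hσ hex
    obtain ⟨f, hf, hfr⟩ := hex
    simp only [simpleBase, Bool.false_eq_true, reduceIte, List.mem_singleton] at hσ
    subst hσ
    simp at hfr
  · intro w hpre
    rcases concat_prefix_cons hpre with ⟨rfl, hh⟩ | ⟨w', rfl, hp'⟩
    · exact absurd hh.symm (kb_ne_daimon false)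
    · exact absurd hp'.length_le (by simp)
  · intro hd
    simp only [List.head?_cons, Option.some.injEq] at hd
    exact absurd hd (kb_ne_daimon false)
  · intro hpos
    exact absurd hpos (simpleBase_neg_not_isPositive _)

lemma chron_single_kn : IsChronicle (simpleBase ξ false) [Action.proper false ξ {i}] :=
  ⟨isPath_single_kn, by simp, fun w a b h _ => absurd h not_prefix_two2⟩

/-! ### chronicle transfers -/

lemma chron_shift_cons {d : List Action}
    (hd : IsChronicle (simpleBase (ξ ++ [i]) false) d) :
    IsChronicle (simpleBase ξ true) (Action.proper true ξ {i} :: d) := by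
  refine ⟨isPath_shift_cons hd.1, by simp, ?_⟩
  intro w a b hpre hneg
  rcases concat2_prefix_cons hpre with ⟨rfl, rfl, t, hdt⟩ | ⟨w', rfl, hp'⟩
  · obtain ⟨I, rfl⟩ := shift_head_neg hd.1 hdt
    exact Or.inr (k0_justifies_iff.mpr ⟨false, I, rfl⟩)
  · rcases hd.2.2 w' a b hp' hneg with hin | hj
    · obtain ⟨I, rfl⟩ := Initial_simple_neg.mp hin
      -- b has focus ξ ++ [i]; so does the head of d: contradiction with linearity
      exfalso
      obtain ⟨r, hr⟩ := hp'
      have hde : d = (w' ++ [a]) ++ Action.proper false (ξ ++ [i]) I :: r := by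
        rw [← hr]; simp
      cases hw : w' ++ [a] with
      | nil => simp at hw
      | cons h₀ t₀ =>
        rw [hw] at hde
        obtain ⟨I₀, rfl⟩ := shift_head_neg hd.1 hde
        rw [hde] at hd
        exact focus_not_mem_tail hd.1 (by simp [Action.focus?])
          (Action.proper false (ξ ++ [i]) I) (by simp) rfl
    · exact Or.inr hj

lemma chron_shift_uncons {d : List Action}
    (hd : IsChronicle (simpleBase ξ true) (Action.proper true ξ {i} :: d))
    (hne : d ≠ []) :
    IsChronicle (simpleBase (ξ ++ [i]) false) d := by
  refine ⟨isPath_shift_uncons hd.1, hne, ?_⟩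
  intro w a b hpre hneg
  have hbig : (Action.proper true ξ {i} :: w) ++ [a, b] <+:
      Action.proper true ξ {i} :: d := by
    rw [List.cons_append]; exact cons_prefix_cons' hpre
  rcases hd.2.2 _ a b hbig hneg with hin | hj
  · obtain ⟨I, heq⟩ := Initial_simple_pos.mp hin
    rw [heq] at hneg
    simp [Action.isPositive] at hneg
  · exact Or.inr hj

lemma chron_ad_cons {c : List Action}
    (hc : IsChronicle (simpleBase (ξ ++ [i]) true) c) :
    IsChronicle (simpleBase ξ false) (Action.proper false ξ {i} :: c) := by
  refine ⟨isPath_ad_cons hc.1, by simp, ?_⟩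
  intro w a b hpre hneg
  rcases concat2_prefix_cons hpre with ⟨rfl, rfl, t, hct⟩ | ⟨w', rfl, hp'⟩
  · have := ad_head_pos hc.1 hct
    rw [this] at hneg
    simp at hneg
  · rcases hc.2.2 w' a b hp' hneg with hin | hj
    · obtain ⟨I, heq⟩ := Initial_simple_pos.mp hin
      rw [heq] at hneg
      simp [Action.isPositive] at hneg
    · exact Or.inr hj

lemma chron_ad_uncons {c : List Action}
    (hc : IsChronicle (simpleBase ξ false) (Action.proper false ξ {i} :: c))
    (hne : c ≠ []) :
    IsChronicle (simpleBase (ξ ++ [i]) true) c := by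
  refine ⟨isPath_ad_uncons hc.1 hne, hne, ?_⟩
  intro w a b hpre hneg
  have hbig : (Action.proper false ξ {i} :: w) ++ [a, b] <+:
      Action.proper false ξ {i} :: c := by
    rw [List.cons_append]; exact cons_prefix_cons' hpre
  rcases hc.2.2 _ a b hbig hneg with hin | hj
  · obtain ⟨I, rfl⟩ := Initial_simple_neg.mp hin
    exact absurd rfl (focus_not_mem_tail hc.1 (kb_focus false) (Action.proper false ξ I)
      (hpre.subset (by simp)))
  · exact Or.inr hj

/-! ### coherence transfers -/

lemma coherent_cons {b : Bool} {c d : List Action} (h : Coherent c d)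
    (hbb : b = true ∨ ∀ I₁ I₂ : Finset ℕ, True) :
    Coherent (Action.proper b ξ {i} :: c) (Action.proper b ξ {i} :: d) := by
  constructor
  · intro w κ₁ κ₂ h₁ h₂
    rcases concat_prefix_cons h₁ with ⟨rfl, rfl⟩ | ⟨w', rfl, hp₁⟩
    · rcases concat_prefix_cons h₂ with ⟨-, rfl⟩ | ⟨w', hw', -⟩
      · exact Or.inl rfl
      · simp at hw'
    · rcases concat_prefix_cons h₂ with ⟨hw', -⟩ | ⟨w'', hw'', hp₂⟩
      · simp at hw'
      · obtain ⟨-, rfl⟩ := List.cons_eq_cons.mp hw''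
        exact h.1 w' κ₁ κ₂ hp₁ hp₂
  · intro w ξ₁ I₁ w₁ σ₁ ξ₂ I₂ w₂ σ₂ h₁ h₂ hξ f hf₁
    rcases middle_prefix_cons h₁ with ⟨rfl, hx₁, hp₁⟩ | ⟨w', rfl, hp₁⟩
    · rcases middle_prefix_cons h₂ with ⟨-, hx₂, hp₂⟩ | ⟨w'', hw'', -⟩
      · -- both heads equal the prefix action: ξ₁ = ξ = ξ₂ contradicts hξ, or b = true
        cases b
        · have e₁ : ξ₁ = ξ := by
            have := congrArg Action.focus? hx₁
            simpa [Action.focus?] using this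
          have e₂ : ξ₂ = ξ := by
            have := congrArg Action.focus? hx₂
            simpa [Action.focus?] using this
          exact absurd (e₁.trans e₂.symm) hξ
        · exact absurd (congrArg Action.isPositive hx₁) (by simp [Action.isPositive])
      · simp at hw''
    · rcases middle_prefix_cons h₂ with ⟨hw'', -⟩ | ⟨w'', hw'', hp₂⟩
      · simp at hw''
      · obtain ⟨-, rfl⟩ := List.cons_eq_cons.mp hw''
        exact h.2 w' ξ₁ I₁ w₁ σ₁ ξ₂ I₂ w₂ σ₂ hp₁ hp₂ hξ f hf₁

lemma coherent_refl_single (a : Action) : Coherent [a] [a] := by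
  constructor
  · intro w κ₁ κ₂ h₁ h₂
    rcases concat_prefix_cons h₁ with ⟨rfl, rfl⟩ | ⟨w', hw', hp₁⟩
    · rcases concat_prefix_cons h₂ with ⟨-, rfl⟩ | ⟨w', hw', -⟩
      · exact Or.inl rfl
      · simp at hw'
    · exact absurd hp₁.length_le (by simp)
  · intro w ξ₁ I₁ w₁ σ₁ ξ₂ I₂ w₂ σ₂ h₁
    exact absurd h₁ not_prefix_two

lemma coherent_single_cons {a : Action} {d : List Action} :
    Coherent [a] (a :: d) := by
  constructor
  · intro w κ₁ κ₂ h₁ h₂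
    rcases concat_prefix_cons h₁ with ⟨rfl, rfl⟩ | ⟨w', hw', hp₁⟩
    · rcases concat_prefix_cons h₂ with ⟨-, rfl⟩ | ⟨w', hw', -⟩
      · exact Or.inl rfl
      · simp at hw'
    · exact absurd hp₁.length_le (by simp)
  · intro w ξ₁ I₁ w₁ σ₁ ξ₂ I₂ w₂ σ₂ h₁
    exact absurd h₁ not_prefix_two

lemma coherent_symm {c d : List Action} (h : Coherent c d) : Coherent d c := by
  constructor
  · intro w κ₁ κ₂ h₁ h₂
    rcases h.1 w κ₂ κ₁ h₂ h₁ with he | ⟨hn₂, hn₁⟩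
    · exact Or.inl he.symm
    · exact Or.inr ⟨hn₁, hn₂⟩
  · intro w ξ₁ I₁ w₁ σ₁ ξ₂ I₂ w₂ σ₂ h₁ h₂ hξ f hf₁ hf₂
    exact h.2 w ξ₂ I₂ w₂ σ₂ ξ₁ I₁ w₁ σ₁ h₂ h₁ (Ne.symm hξ) f hf₂ hf₁

lemma coherent_uncons {a : Action} {c d : List Action}
    (h : Coherent (a :: c) (a :: d)) : Coherent c d := by
  constructor
  · intro w κ₁ κ₂ h₁ h₂
    refine h.1 (a :: w) κ₁ κ₂ ?_ ?_
    · rw [List.cons_append]; exact cons_prefix_cons' h₁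
    · rw [List.cons_append]; exact cons_prefix_cons' h₂
  · intro w ξ₁ I₁ w₁ σ₁ ξ₂ I₂ w₂ σ₂ h₁ h₂ hξ f hf₁
    refine h.2 (a :: w) ξ₁ I₁ w₁ σ₁ ξ₂ I₂ w₂ σ₂ ?_ ?_ hξ f hf₁
    · rw [List.cons_append]; exact cons_prefix_cons' h₁
    · rw [List.cons_append]; exact cons_prefix_cons' h₂



variable {ξ : Address} {i : ℕ}

lemma design_chron_ne_nil {β : Base} {D : Set (List Action)} (hD : IsDesign β D) :
    ∀ c ∈ D, c ≠ [] := fun c hc => (hD.chron c hc).2.1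

lemma getLast?_cons_of_ne_nil {a : Action} {d : List Action} (h : d ≠ []) :
    (a :: d).getLast? = d.getLast? := by
  rcases List.eq_nil_or_concat d with rfl | ⟨d', x, rfl⟩
  · exact absurd rfl h
  · rw [List.concat_eq_append, ← List.cons_append, List.getLast?_concat, List.getLast?_concat]

/-! ### `prefD` designs -/

lemma design_prefD_pos {D : Set (List Action)}
    (hD : IsDesign (simpleBase (ξ ++ [i]) false) D) :
    IsDesign (simpleBase ξ true) (prefD (Action.proper true ξ {i}) D) := by
  refine ⟨?_, ?_, ?_, ?_, ?_⟩
  · rintro c (rfl | ⟨d, hd, rfl⟩)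
    · exact chron_single_kp
    · exact chron_shift_cons (hD.chron d hd)
  · rintro c (rfl | ⟨d, hd, rfl⟩) e he hene
    · rcases prefix_cons_cases he with rfl | ⟨e', rfl, he'⟩
      · exact absurd rfl hene
      · have : e' = [] := List.prefix_nil.mp he'
        subst this
        exact Or.inl rfl
    · rcases prefix_cons_cases he with rfl | ⟨e', rfl, he'⟩
      · exact absurd rfl hene
      · rcases eq_or_ne e' [] with rfl | hne
        · exact Or.inl rfl
        · exact Or.inr ⟨e', hD.prefixClosed d hd e' he' hne, rfl⟩
  · rintro c (rfl | ⟨d, hd, rfl⟩) e (rfl | ⟨d', hd', rfl⟩)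
    · exact coherent_refl_single _
    · exact coherent_single_cons
    · exact coherent_symm coherent_single_cons
    · exact coherent_cons (hD.coherent d hd d' hd') (Or.inl rfl)
  · rintro c (rfl | ⟨d, hd, rfl⟩) hmax
    · exact ⟨_, rfl, rfl⟩
    · have hd_ne := design_chron_ne_nil hD d hd
      have : ∀ κ, d ++ [κ] ∉ D := by
        intro κ hκ
        exact hmax κ (Or.inr ⟨d ++ [κ], hκ, by simp⟩)
      obtain ⟨a, ha, hpa⟩ := hD.maxPos d hd this
      exact ⟨a, by rw [getLast?_cons_of_ne_nil hd_ne]; exact ha, hpa⟩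
  · intro _
    exact ⟨[Action.proper true ξ {i}], Or.inl rfl⟩

lemma design_prefD_neg {P : Set (List Action)}
    (hP : IsDesign (simpleBase (ξ ++ [i]) true) P) :
    IsDesign (simpleBase ξ false) (prefD (Action.proper false ξ {i}) P) := by
  refine ⟨?_, ?_, ?_, ?_, ?_⟩
  · rintro c (rfl | ⟨d, hd, rfl⟩)
    · exact chron_single_kn
    · exact chron_ad_cons (hP.chron d hd)
  · rintro c (rfl | ⟨d, hd, rfl⟩) e he hene
    · rcases prefix_cons_cases he with rfl | ⟨e', rfl, he'⟩
      · exact absurd rfl hene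
      · have : e' = [] := List.prefix_nil.mp he'
        subst this
        exact Or.inl rfl
    · rcases prefix_cons_cases he with rfl | ⟨e', rfl, he'⟩
      · exact absurd rfl hene
      · rcases eq_or_ne e' [] with rfl | hne
        · exact Or.inl rfl
        · exact Or.inr ⟨e', hP.prefixClosed d hd e' he' hne, rfl⟩
  · rintro c (rfl | ⟨d, hd, rfl⟩) e (rfl | ⟨d', hd', rfl⟩)
    · exact coherent_refl_single _
    · exact coherent_single_cons
    · exact coherent_symm coherent_single_cons
    · exact coherent_cons (hP.coherent d hd d' hd') (Or.inr fun _ _ => trivial)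
  · rintro c (rfl | ⟨d, hd, rfl⟩) hmax
    · exfalso
      obtain ⟨c₀, hc₀⟩ := hP.posNonempty (simpleBase_pos_isPositive _)
      have hc₀ne := design_chron_ne_nil hP c₀ hc₀
      obtain ⟨a, t, rfl⟩ := List.exists_cons_of_ne_nil hc₀ne
      have ha : [a] ∈ P := hP.prefixClosed _ hc₀ [a] ⟨t, rfl⟩ (by simp)
      exact hmax a (Or.inr ⟨[a], ha, rfl⟩)
    · have hd_ne := design_chron_ne_nil hP d hd
      have : ∀ κ, d ++ [κ] ∉ P := by
        intro κ hκ
        exact hmax κ (Or.inr ⟨d ++ [κ], hκ, by simp⟩)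
      obtain ⟨a, ha, hpa⟩ := hP.maxPos d hd this
      exact ⟨a, by rw [getLast?_cons_of_ne_nil hd_ne]; exact ha, hpa⟩
  · intro h
    exact absurd h (simpleBase_neg_not_isPositive _)

/-! ### `unpref` designs -/

lemma design_unpref_pos {D : Set (List Action)}
    (hD : IsDesign (simpleBase ξ true) D) :
    IsDesign (simpleBase (ξ ++ [i]) false) (unpref (Action.proper true ξ {i}) D) := by
  refine ⟨?_, ?_, ?_, ?_, ?_⟩
  · rintro c ⟨hne, hmem⟩
    exact chron_shift_uncons (hD.chron _ hmem) hne
  · rintro c ⟨hne, hmem⟩ e he hene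
    exact ⟨hene, hD.prefixClosed _ hmem _ (cons_prefix_cons' he) (by simp)⟩
  · rintro c ⟨hnc, hmc⟩ e ⟨hne, hme⟩
    exact coherent_uncons (hD.coherent _ hmc _ hme)
  · rintro c ⟨hnc, hmc⟩ hmax
    have : ∀ κ, (Action.proper true ξ {i} :: c) ++ [κ] ∉ D := by
      intro κ hκ
      exact hmax κ ⟨by simp, by simpa using hκ⟩
    obtain ⟨a, ha, hpa⟩ := hD.maxPos _ hmc this
    rw [getLast?_cons_of_ne_nil hnc] at ha
    exact ⟨a, ha, hpa⟩
  · intro h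
    exact absurd h (simpleBase_neg_not_isPositive _)

lemma design_unpref_neg {E : Set (List Action)}
    (hE : IsDesign (simpleBase ξ false) E)
    (hk : [Action.proper false ξ {i}] ∈ E) :
    IsDesign (simpleBase (ξ ++ [i]) true) (unpref (Action.proper false ξ {i}) E) := by
  refine ⟨?_, ?_, ?_, ?_, ?_⟩
  · rintro c ⟨hne, hmem⟩
    exact chron_ad_uncons (hE.chron _ hmem) hne
  · rintro c ⟨hne, hmem⟩ e he hene
    exact ⟨hene, hE.prefixClosed _ hmem _ (cons_prefix_cons' he) (by simp)⟩
  · rintro c ⟨hnc, hmc⟩ e ⟨hne, hme⟩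
    exact coherent_uncons (hE.coherent _ hmc _ hme)
  · rintro c ⟨hnc, hmc⟩ hmax
    have : ∀ κ, (Action.proper false ξ {i} :: c) ++ [κ] ∉ E := by
      intro κ hκ
      exact hmax κ ⟨by simp, by simpa using hκ⟩
    obtain ⟨a, ha, hpa⟩ := hE.maxPos _ hmc this
    rw [getLast?_cons_of_ne_nil hnc] at ha
    exact ⟨a, ha, hpa⟩
  · intro _
    by_cases h : ∃ κ, [Action.proper false ξ {i}, κ] ∈ E
    · obtain ⟨κ, hκ⟩ := h
      exact ⟨[κ], by simp, hκ⟩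
    · exfalso
      push_neg at h
      have : ∀ κ, [Action.proper false ξ {i}] ++ [κ] ∉ E := by
        intro κ hκ
        exact h κ (by simpa using hκ)
      obtain ⟨a, ha, hpa⟩ := hE.maxPos _ hk this
      simp only [List.getLast?_singleton, Option.some.injEq] at ha
      rw [← ha] at hpa
      simp [Action.isPositive] at hpa

/-! ### PathOf transfers -/

lemma pathOf_shift_cons {D : Set (List Action)} {q : List Action}
    (h : PathOf (simpleBase (ξ ++ [i]) false) D q) :
    PathOf (simpleBase ξ true) (prefD (Action.proper true ξ {i}) D)
      (Action.proper true ξ {i} :: q) := by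
  refine ⟨isPath_shift_cons h.1, ?_⟩
  intro r hr hrne
  rcases prefix_cons_cases hr with rfl | ⟨r', rfl, hr'⟩
  · exact absurd rfl hrne
  · rcases eq_or_ne r' [] with rfl | hne
    · rw [view_singleton]
      exact Or.inl rfl
    · rw [view_cons_k (justI_of_path h.1 hr')]
      exact Or.inr ⟨view r', h.2 r' hr' hne, rfl⟩

lemma pathOf_shift_uncons {D : Set (List Action)} {q : List Action}
    (h : PathOf (simpleBase ξ true) D (Action.proper true ξ {i} :: q)) :
    PathOf (simpleBase (ξ ++ [i]) false) (unpref (Action.proper true ξ {i}) D) q := by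
  refine ⟨isPath_shift_uncons h.1, ?_⟩
  intro r hr hrne
  have hv := h.2 (Action.proper true ξ {i} :: r) (cons_prefix_cons' hr) (by simp)
  rw [view_cons_k (justI_of_path_cons (b := true) (b' := true) h.1 hr)] at hv
  exact ⟨view_ne_nil hrne, hv⟩

lemma pathOf_ad_cons {P : Set (List Action)} {r : List Action}
    (h : PathOf (simpleBase (ξ ++ [i]) true) P r) :
    PathOf (simpleBase ξ false) (prefD (Action.proper false ξ {i}) P)
      (Action.proper false ξ {i} :: r) := by
  refine ⟨isPath_ad_cons h.1, ?_⟩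
  intro s hs hsne
  rcases prefix_cons_cases hs with rfl | ⟨s', rfl, hs'⟩
  · exact absurd rfl hsne
  · rcases eq_or_ne s' [] with rfl | hne
    · rw [view_singleton]
      exact Or.inl rfl
    · rw [view_cons_k (justI_of_path h.1 hs')]
      exact Or.inr ⟨view s', h.2 s' hs' hne, rfl⟩

lemma pathOf_ad_uncons {E : Set (List Action)} {r : List Action}
    (h : PathOf (simpleBase ξ false) E (Action.proper false ξ {i} :: r))
    (hrne : r ≠ []) :
    PathOf (simpleBase (ξ ++ [i]) true) (unpref (Action.proper false ξ {i}) E) r := by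
  refine ⟨isPath_ad_uncons h.1 hrne, ?_⟩
  intro s hs hsne
  have hv := h.2 (Action.proper false ξ {i} :: s) (cons_prefix_cons' hs) (by simp)
  rw [view_cons_k (justI_of_path_cons (b := false) (b' := false) h.1 hs)] at hv
  exact ⟨view_ne_nil hsne, hv⟩



variable {ξ : Address} {i : ℕ}

@[simp] lemma kp_dual : (Action.proper true ξ {i}).dual = Action.proper false ξ {i} := rfl
@[simp] lemma kn_dual : (Action.proper false ξ {i}).dual = Action.proper true ξ {i} := rfl

@[simp] lemma map_dual_comp (l : List Action) :
    l.map (Action.dual ∘ Action.dual) = l := by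
  simp [Function.comp_def]

/-! ### turn lemmas -/

lemma turnD_nil : TurnD True ([] : List Action) := trivial

lemma turnD_concat {d : Prop} (s : List Action) (a : Action) :
    TurnD d (s ++ [a]) ↔ (a.isPositive = false) := by
  simp [TurnD, List.getLast?_concat]

lemma turn_flip {s : List Action} (hs : Action.daimon ∉ s) :
    TurnD True (Action.proper true ξ {i} :: s.map Action.dual) ↔ ¬ TurnD True s := by
  rcases List.eq_nil_or_concat s with rfl | ⟨t, a, rfl⟩
  · constructor
    · intro h _
      have : TurnD True ([] ++ [Action.proper true ξ {i}]) := h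
      rw [turnD_concat] at this
      simp at this
    · intro h
      exact absurd trivial h
  · rw [List.concat_eq_append] at hs ⊢
    have ha : a ≠ .daimon := by
      intro h
      exact hs (by simp [h])
    have h1 : Action.proper true ξ {i} :: (t ++ [a]).map Action.dual =
        (Action.proper true ξ {i} :: t.map Action.dual) ++ [a.dual] := by simp
    rw [h1, turnD_concat, turnD_concat, Action.isPositive_dual ha]
    cases hp : a.isPositive <;> simp [hp]

/-! ### justifier transport -/

lemma justifier_map_dual {s : List Action} {κ : Action}
    (h : ∃ b ∈ s, b.justifies κ) : ∃ b ∈ s.map Action.dual, b.justifies κ.dual := by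
  obtain ⟨b, hb, hj⟩ := h
  exact ⟨b.dual, List.mem_map_of_mem hb, by simpa [Action.justifies] using hj⟩

lemma justifier_of_map_dual {s : List Action} {κ : Action}
    (h : ∃ b ∈ s.map Action.dual, b.justifies κ.dual) : ∃ b ∈ s, b.justifies κ := by
  obtain ⟨b, hb, hj⟩ := h
  obtain ⟨c, hc, rfl⟩ := List.mem_map.mp hb
  exact ⟨c, hc, by simpa [Action.justifies] using hj⟩

lemma goodFor_concat_pos {c₀ x : Action} {s : List Action} (h : GoodFor c₀ s)
    (hx : x.isPositive = true) : GoodFor c₀ (s ++ [x]) := by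
  intro w₁ a w₂ hdec hneg hnone
  rcases concat_decomp hdec with ⟨rfl, rfl, rfl⟩ | ⟨w₂', rfl, hs⟩
  · rw [hx] at hneg; simp at hneg
  · exact h _ _ _ hs hneg hnone

/-! ### membership extraction -/

lemma extend_data' {ζ : Address} {b : Bool} {G : Set (List Action)}
    {s : List Action} {κ : Action}
    (hG : IsDesign (simpleBase ζ b) G) (hmem : view (s ++ [κ]) ∈ G)
    (hκ : κ ≠ .daimon) :
    (∃ c ∈ s, c.justifies κ) ∨ ∃ I, κ = .proper b ζ I := by
  rcases view_concat_mem_design hG hmem hκ with hin | hj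
  · exact Or.inr (Initial_simple hin)
  · exact Or.inl hj

/-- Extraction through a prefixed action `(b, ξ, {i})` at the bottom:
the new action is justified inside `X` or has focus `ξ ++ [i]`. -/
lemma extend_data_big {b : Bool} {G : Set (List Action)} {X : List Action} {κ : Action}
    (hG : IsDesign (simpleBase ξ b) G)
    (hmem : view ((Action.proper b ξ {i} :: X) ++ [κ]) ∈ G)
    (hview : view (Action.proper b ξ {i} :: (X ++ [κ])) =
      Action.proper b ξ {i} :: view (X ++ [κ]))
    (hκ : κ ≠ .daimon) :
    (∃ c ∈ X, c.justifies κ) ∨ κ.focus? = some (ξ ++ [i]) := by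
  rcases view_concat_mem_design hG hmem hκ with hin | ⟨c, hc, hj⟩
  · exfalso
    obtain ⟨I, rfl⟩ := Initial_simple hin
    have hmem' : view (Action.proper b ξ {i} :: (X ++ [Action.proper b ξ I])) ∈ G := by
      rw [← List.cons_append]; exact hmem
    rw [hview] at hmem'
    have hlin := ((hG.chron _ hmem').1).linearity
    obtain ⟨w, hw, -⟩ := view_concat X (Action.proper b ξ I)
    refine focus_not_mem_tail' hlin (kb_focus b) (Action.proper b ξ I) ?_ rfl
    rw [hw]; simp
  · rcases List.mem_cons.mp hc with rfl | hcX
    · obtain ⟨pa, Ia, rfl⟩ := k0_justifies_iff.mp hj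
      exact Or.inr rfl
    · exact Or.inl ⟨c, hcX, hj⟩

/-! ### the upward simulation -/

theorem sim_up {Ds Rs : Set (List Action)}
    (hDs : IsDesign (simpleBase (ξ ++ [i]) true) Ds)
    (hRs : IsDesign (simpleBase (ξ ++ [i]) false) Rs) :
    ∀ {s : List Action}, Conv Ds Rs True s → Action.daimon ∉ s → JustI (ξ ++ [i]) s →
      Conv (prefD (Action.proper true ξ {i}) Rs) (prefD (Action.proper false ξ {i}) Ds)
        True (Action.proper true ξ {i} :: s.map Action.dual) := by
  intro s h
  induction h with
  | @daiD s hturn hv =>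
    intro hnd hJ
    refine Conv.daiR ?_ ?_
    · rw [turn_flip hnd]
      exact fun h' => h' hturn
    · have hJ' : JustI (ξ ++ [i]) (s ++ [Action.daimon]) :=
        justI_concat hJ (Or.inr (Or.inr rfl))
      have h1 : (Action.proper true ξ {i} :: s.map Action.dual).map Action.dual ++
          [Action.daimon] = Action.proper false ξ {i} :: (s ++ [Action.daimon]) := by
        simp
      rw [h1, view_cons_k hJ']
      exact Or.inr ⟨_, hv, rfl⟩
  | @daiR s hturn hv =>
    intro hnd hJ
    refine Conv.daiD ?_ ?_
    · rw [turn_flip hnd]; exact hturn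
    · have hJ' : JustI (ξ ++ [i]) (s.map Action.dual ++ [Action.daimon]) :=
        justI_concat (justI_map_dual hJ) (Or.inr (Or.inr rfl))
      have h1 : (Action.proper true ξ {i} :: s.map Action.dual) ++ [Action.daimon] =
          Action.proper true ξ {i} :: (s.map Action.dual ++ [Action.daimon]) := rfl
      rw [h1, view_cons_k hJ']
      exact Or.inr ⟨_, hv, rfl⟩
  | @stepD s κ hturn hκp hκd hvD hvR hconv ih =>
    intro hnd hJ
    have hdata : (∃ c ∈ s, c.justifies κ) ∨ κ.focus? = some (ξ ++ [i]) := by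
      rcases extend_data' hDs hvD hκd with h' | ⟨I, rfl⟩
      · exact Or.inl h'
      · exact Or.inr rfl
    have hJ' : JustI (ξ ++ [i]) (s ++ [κ]) := by
      rcases hdata with h' | h'
      · exact justI_concat hJ (Or.inl h')
      · exact justI_concat hJ (Or.inr (Or.inl h'))
    have hnd' : Action.daimon ∉ s ++ [κ] := by
      intro hm
      rcases List.mem_append.mp hm with hm | hm
      · exact hnd hm
      · simp only [List.mem_singleton] at hm
        exact hκd hm.symm
    refine Conv.stepR (κ := κ.dual) ?_ ?_ ?_ ?_ ?_
    · rw [turn_flip hnd]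
      exact fun h' => h' hturn
    · exact Action.pos_dual_neg hκp hκd
    · have h1 : ((Action.proper true ξ {i} :: s.map Action.dual) ++ [κ.dual]).map
          Action.dual = Action.proper false ξ {i} :: (s ++ [κ]) := by
        simp
      rw [h1, view_cons_k hJ']
      exact Or.inr ⟨_, hvD, rfl⟩
    · have h1 : (Action.proper true ξ {i} :: s.map Action.dual) ++ [κ.dual] =
          Action.proper true ξ {i} :: ((s ++ [κ]).map Action.dual) := by
        simp
      rw [h1, view_cons_k (justI_map_dual hJ')]
      exact Or.inr ⟨_, hvR, rfl⟩
    · have h1 : (Action.proper true ξ {i} :: s.map Action.dual) ++ [κ.dual] =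
          Action.proper true ξ {i} :: ((s ++ [κ]).map Action.dual) := by
        simp
      rw [h1]
      exact ih hnd' hJ'
  | @stepR s κ hturn hκn hvR hvD hconv ih =>
    intro hnd hJ
    have hκd : κ ≠ .daimon := Action.neg_ne_daimon hκn
    have hdata : ∃ c ∈ s, c.justifies κ := by
      have hvR' : view (s.map Action.dual ++ [κ.dual]) ∈ Rs := by
        have : (s ++ [κ]).map Action.dual = s.map Action.dual ++ [κ.dual] := by simp
        rwa [this] at hvR
      rcases extend_data' hRs hvR' (Action.dual_ne_daimon hκd) with h' | ⟨I, hI⟩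
      · exact justifier_of_map_dual h'
      · exfalso
        have := congrArg Action.isPositive hI
        rw [Action.neg_dual_pos hκn] at this
        simp [Action.isPositive] at this
    have hJ' : JustI (ξ ++ [i]) (s ++ [κ]) := justI_concat hJ (Or.inl hdata)
    have hnd' : Action.daimon ∉ s ++ [κ] := by
      intro hm
      rcases List.mem_append.mp hm with hm | hm
      · exact hnd hm
      · simp only [List.mem_singleton] at hm
        exact hκd hm.symm
    refine Conv.stepD (κ := κ.dual) ?_ ?_ ?_ ?_ ?_ ?_
    · rw [turn_flip hnd]; exact hturn
    · exact Action.neg_dual_pos hκn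
    · exact Action.dual_ne_daimon hκd
    · have h1 : (Action.proper true ξ {i} :: s.map Action.dual) ++ [κ.dual] =
          Action.proper true ξ {i} :: ((s ++ [κ]).map Action.dual) := by
        simp
      rw [h1, view_cons_k (justI_map_dual hJ')]
      exact Or.inr ⟨_, hvR, rfl⟩
    · have h1 : ((Action.proper true ξ {i} :: s.map Action.dual) ++ [κ.dual]).map
          Action.dual = Action.proper false ξ {i} :: (s ++ [κ]) := by
        simp
      rw [h1, view_cons_k hJ']
      exact Or.inr ⟨_, hvD, rfl⟩
    · have h1 : (Action.proper true ξ {i} :: s.map Action.dual) ++ [κ.dual] =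
          Action.proper true ξ {i} :: ((s ++ [κ]).map Action.dual) := by
        simp
      rw [h1]
      exact ih hnd' hJ'

theorem sim_up_start {Ds Rs : Set (List Action)}
    (hDs : IsDesign (simpleBase (ξ ++ [i]) true) Ds)
    (hRs : IsDesign (simpleBase (ξ ++ [i]) false) Rs)
    (h : Conv Ds Rs True []) :
    Conv (prefD (Action.proper true ξ {i}) Rs) (prefD (Action.proper false ξ {i}) Ds)
      True [] := by
  have h0 := sim_up hDs hRs h (by simp) (justI_nil _)
  refine Conv.stepD (s := []) (κ := Action.proper true ξ {i}) turnD_nil rfl (by simp) ?_ ?_ ?_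
  · rw [List.nil_append, view_singleton]
    exact Or.inl rfl
  · rw [List.nil_append]
    have : ([Action.proper true ξ {i}] : List Action).map Action.dual =
        [Action.proper false ξ {i}] := by simp
    rw [this, view_singleton]
    exact Or.inl rfl
  · simpa using h0



variable {ξ : Address} {i : ℕ}

theorem sim_down {Db Rb : Set (List Action)}
    (hDb : IsDesign (simpleBase ξ true) Db)
    (hRb : IsDesign (simpleBase ξ false) Rb) :
    ∀ {S : List Action}, Conv Db Rb True S →
      ∀ s, S = Action.proper true ξ {i} :: s.map Action.dual →
        Action.daimon ∉ s → JustI (ξ ++ [i]) s →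
        Conv (unpref (Action.proper false ξ {i}) Rb)
          (unpref (Action.proper true ξ {i}) Db) True s := by
  intro S h
  induction h with
  | @daiD S hturn hv =>
    rintro s rfl hnd hJ
    refine Conv.daiR ?_ ?_
    · intro h'
      exact (turn_flip hnd).mp hturn h'
    · have hJ' : JustI (ξ ++ [i]) (s.map Action.dual ++ [Action.daimon]) :=
        justI_concat (justI_map_dual hJ) (Or.inr (Or.inr rfl))
      have h1 : (Action.proper true ξ {i} :: s.map Action.dual) ++ [Action.daimon] =
          Action.proper true ξ {i} :: (s.map Action.dual ++ [Action.daimon]) := rfl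
      rw [h1, view_cons_k hJ'] at hv
      exact ⟨view_concat_ne_nil _ _, hv⟩
  | @daiR S hturn hv =>
    rintro s rfl hnd hJ
    refine Conv.daiD ?_ ?_
    · by_contra h'
      exact hturn ((turn_flip hnd).mpr h')
    · have hJ' : JustI (ξ ++ [i]) (s ++ [Action.daimon]) :=
        justI_concat hJ (Or.inr (Or.inr rfl))
      have h1 : (Action.proper true ξ {i} :: s.map Action.dual).map Action.dual ++
          [Action.daimon] = Action.proper false ξ {i} :: (s ++ [Action.daimon]) := by
        simp
      rw [h1, view_cons_k hJ'] at hv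
      exact ⟨view_concat_ne_nil _ _, hv⟩
  | @stepD S κ hturn hκp hκd hvD hvR hconv ih =>
    rintro s rfl hnd hJ
    -- the new action κ is positive in the big interaction
    have hgood : GoodFor (Action.proper true ξ {i}) (s.map Action.dual ++ [κ]) :=
      goodFor_concat_pos (goodFor_of_justI (justI_map_dual hJ) kb_justifies_focus) hκp
    have hview : view (Action.proper true ξ {i} :: (s.map Action.dual ++ [κ])) =
        Action.proper true ξ {i} :: view (s.map Action.dual ++ [κ]) :=
      view_cons hgood
    have hvD' : view ((Action.proper true ξ {i} :: s.map Action.dual) ++ [κ]) ∈ Db := hvD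
    have hdata : (∃ c ∈ s.map Action.dual, c.justifies κ) ∨
        κ.focus? = some (ξ ++ [i]) :=
      extend_data_big hDb hvD' hview hκd
    have hdata' : (∃ c ∈ s, c.justifies κ.dual) ∨ κ.dual.focus? = some (ξ ++ [i]) := by
      rcases hdata with h' | h'
      · refine Or.inl (justifier_of_map_dual ?_)
        simpa using h'
      · exact Or.inr (by simpa using h')
    have hJ' : JustI (ξ ++ [i]) (s ++ [κ.dual]) := by
      rcases hdata' with h' | h'
      · exact justI_concat hJ (Or.inl h')
      · exact justI_concat hJ (Or.inr (Or.inl h'))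
    have hnd' : Action.daimon ∉ s ++ [κ.dual] := by
      intro hm
      rcases List.mem_append.mp hm with hm | hm
      · exact hnd hm
      · simp only [List.mem_singleton] at hm
        exact (Action.dual_ne_daimon hκd) hm.symm
    refine Conv.stepR (κ := κ.dual) ?_ ?_ ?_ ?_ ?_
    · intro h'
      exact (turn_flip hnd).mp hturn h'
    · exact Action.pos_dual_neg hκp hκd
    · -- view ((s ++ [κ.dual]).map dual) ∈ unpref kp Db
      have h1 : (s ++ [κ.dual]).map Action.dual = s.map Action.dual ++ [κ] := by simp
      rw [h1]
      have h2 : view (Action.proper true ξ {i} :: (s.map Action.dual ++ [κ])) ∈ Db := by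
        rw [← List.cons_append]; exact hvD
      rw [hview] at h2
      exact ⟨view_concat_ne_nil _ _, h2⟩
    · -- view (s ++ [κ.dual]) ∈ unpref kn Rb
      have h1 : ((Action.proper true ξ {i} :: s.map Action.dual) ++ [κ]).map Action.dual =
          Action.proper false ξ {i} :: (s ++ [κ.dual]) := by simp
      rw [h1, view_cons_k hJ'] at hvR
      exact ⟨view_concat_ne_nil _ _, hvR⟩
    · refine ih (s ++ [κ.dual]) ?_ hnd' hJ'
      simp
  | @stepR S κ hturn hκn hvR hvD hconv ih =>
    rintro s rfl hnd hJ
    have hκd : κ ≠ .daimon := Action.neg_ne_daimon hκn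
    have hκdp : κ.dual.isPositive = true := Action.neg_dual_pos hκn
    have hgood : GoodFor (Action.proper false ξ {i}) (s ++ [κ.dual]) :=
      goodFor_concat_pos (goodFor_of_justI hJ kb_justifies_focus) hκdp
    have hview : view (Action.proper false ξ {i} :: (s ++ [κ.dual])) =
        Action.proper false ξ {i} :: view (s ++ [κ.dual]) :=
      view_cons hgood
    have hvR' : view ((Action.proper false ξ {i} :: s) ++ [κ.dual]) ∈ Rb := by
      have h1 : ((Action.proper true ξ {i} :: s.map Action.dual) ++ [κ]).map Action.dual =
          (Action.proper false ξ {i} :: s) ++ [κ.dual] := by simp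
      rwa [h1] at hvR
    have hdata : (∃ c ∈ s, c.justifies κ.dual) ∨ κ.dual.focus? = some (ξ ++ [i]) :=
      extend_data_big hRb hvR' hview (Action.dual_ne_daimon hκd)
    have hJ' : JustI (ξ ++ [i]) (s ++ [κ.dual]) := by
      rcases hdata with h' | h'
      · exact justI_concat hJ (Or.inl h')
      · exact justI_concat hJ (Or.inr (Or.inl h'))
    have hnd' : Action.daimon ∉ s ++ [κ.dual] := by
      intro hm
      rcases List.mem_append.mp hm with hm | hm
      · exact hnd hm
      · simp only [List.mem_singleton] at hm
        exact (Action.dual_ne_daimon hκd) hm.symm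
    refine Conv.stepD (κ := κ.dual) ?_ ?_ ?_ ?_ ?_ ?_
    · by_contra h'
      exact hturn ((turn_flip hnd).mpr h')
    · exact hκdp
    · exact Action.dual_ne_daimon hκd
    · -- view (s ++ [κ.dual]) ∈ unpref kn Rb
      have h2 : view (Action.proper false ξ {i} :: (s ++ [κ.dual])) ∈ Rb := by
        rw [← List.cons_append]; exact hvR'
      rw [hview] at h2
      exact ⟨view_concat_ne_nil _ _, h2⟩
    · -- view ((s ++ [κ.dual]).map dual) ∈ unpref kp Db
      have h1 : (s ++ [κ.dual]).map Action.dual = s.map Action.dual ++ [κ] := by simp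
      rw [h1]
      have hJd : JustI (ξ ++ [i]) (s.map Action.dual ++ [κ]) := by
        have := justI_map_dual hJ'
        simpa using this
      have h2 : view ((Action.proper true ξ {i} :: s.map Action.dual) ++ [κ]) ∈ Db := hvD
      rw [List.cons_append, view_cons_k hJd] at h2
      exact ⟨view_concat_ne_nil _ _, h2⟩
    · refine ih (s ++ [κ.dual]) ?_ hnd' hJ'
      simp
  

theorem sim_down_start {Db Rb : Set (List Action)}
    (hDb : IsDesign (simpleBase ξ true) Db)
    (hRb : IsDesign (simpleBase ξ false) Rb)
    (hfirst : ∀ x, [x] ∈ Db → x = Action.proper true ξ {i})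
    (h : Conv Db Rb True []) :
    Conv (unpref (Action.proper false ξ {i}) Rb)
      (unpref (Action.proper true ξ {i}) Db) True [] := by
  cases h with
  | daiD hturn hv =>
    exfalso
    rw [List.nil_append, view_singleton] at hv
    exact (by simp : (Action.daimon : Action) ≠ Action.proper true ξ {i})
      (hfirst _ hv)
  | daiR hturn hv =>
    exact absurd turnD_nil hturn
  | @stepD s κ hturn hκp hκd hvD hvR hconv =>
    have hκ : κ = Action.proper true ξ {i} := by
      apply hfirst
      rw [List.nil_append, view_singleton] at hvD
      exact hvD
    subst hκ
    refine sim_down hDb hRb hconv [] ?_ (by simp) (justI_nil _)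
    simp
  | stepR hturn =>
    exact absurd turnD_nil hturn



variable {ξ : Address} {i : ℕ}

/-! ### membership unfolding for orthogonals -/

lemma mem_orth_true {ζ : Address} {A : Set (Set (List Action))} {E : Set (List Action)} :
    E ∈ orthSet ζ true A ↔
      IsDesign (simpleBase ζ false) E ∧ ∀ D ∈ A, Conv D E True [] := Iff.rfl

lemma mem_orth_false {ζ : Address} {A : Set (Set (List Action))} {P : Set (List Action)} :
    P ∈ orthSet ζ false A ↔
      IsDesign (simpleBase ζ true) P ∧ ∀ D ∈ A, Conv P D True [] := Iff.rfl

lemma mem_biorth_true {ζ : Address} {A : Set (Set (List Action))} {D : Set (List Action)} :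
    D ∈ biorth ζ true A ↔
      IsDesign (simpleBase ζ true) D ∧ ∀ E ∈ orthSet ζ true A, Conv D E True [] := Iff.rfl

lemma mem_biorth_false {ζ : Address} {A : Set (Set (List Action))} {D : Set (List Action)} :
    D ∈ biorth ζ false A ↔
      IsDesign (simpleBase ζ false) D ∧ ∀ P ∈ orthSet ζ false A, Conv P D True [] := Iff.rfl

/-! ### the daimon design -/

lemma isPath_daimon (ζ : Address) : IsPath (simpleBase ζ true) [Action.daimon] := by
  refine ⟨by simp [List.Chain'], ?_, ?_, ?_, by exact List.nodup_nil, ?_, ?_, ?_⟩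
  · intro w a hpre ha
    rcases concat_prefix_cons hpre with ⟨rfl, rfl⟩ | ⟨w', rfl, hp'⟩
    · exact absurd rfl ha
    · exact absurd hp'.length_le (by simp)
  · intro w a b hpre hpos hb hj
    rcases concat_prefix_cons hpre with ⟨rfl, rfl⟩ | ⟨w', rfl, hp'⟩
    · simp at hb
    · exact absurd hp'.length_le (by simp)
  · intro w a hpre hpos hne σ hσ hex
    rcases concat_prefix_cons hpre with ⟨rfl, rfl⟩ | ⟨w', rfl, hp'⟩
    · exact absurd rfl hne
    · exact absurd hp'.length_le (by simp)
  · intro w hpre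
    rcases concat_prefix_cons hpre with ⟨rfl, -⟩ | ⟨w', rfl, hp'⟩
    · rfl
    · exact absurd hp'.length_le (by simp)
  · intro _
    exact simpleBase_pos_isPositive _
  · intro _
    exact ⟨.daimon, [], rfl, Or.inl rfl⟩

lemma chron_daimon (ζ : Address) : IsChronicle (simpleBase ζ true) [Action.daimon] :=
  ⟨isPath_daimon ζ, by simp, fun w a b h _ => absurd h not_prefix_two2⟩

lemma design_DaiDesign (ζ : Address) : IsDesign (simpleBase ζ true) DaiDesign := by
  refine ⟨?_, ?_, ?_, ?_, ?_⟩
  · rintro c rfl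
    exact chron_daimon ζ
  · rintro c rfl d hd hdne
    rcases prefix_cons_cases hd with rfl | ⟨d', rfl, hd'⟩
    · exact absurd rfl hdne
    · have : d' = [] := List.prefix_nil.mp hd'
      subst this
      rfl
  · rintro c rfl e rfl
    exact coherent_refl_single _
  · rintro c rfl hmax
    exact ⟨.daimon, rfl, rfl⟩
  · intro _
    exact ⟨[.daimon], rfl⟩

lemma conv_DaiDesign_left {R : Set (List Action)} : Conv DaiDesign R True [] :=
  Conv.daiD turnD_nil (by rw [List.nil_append, view_singleton]; rfl)

/-! ### key memberships -/

section Shift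

variable {N : Behaviour (ξ ++ [i]) false} {C : Behaviour ξ true}

/-- Positive designs orthogonal to `N` yield adapters orthogonal to the shifted
designs. -/
lemma adapter_mem (hshift : IsShiftOf ξ i C N) :
    ∀ P ∈ orthSet (ξ ++ [i]) false N.designs,
      prefD (Action.proper false ξ {i}) P ∈
        orthSet ξ true (shiftD ξ i '' N.designs) := by
  intro P hP
  obtain ⟨hPd, hPo⟩ := mem_orth_false.mp hP
  refine mem_orth_true.mpr ⟨design_prefD_neg hPd, ?_⟩
  rintro D' ⟨D₀, hD₀, rfl⟩
  rw [shiftD_eq]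
  exact sim_up_start hPd (N.isDesign D₀ hD₀) (hPo D₀ hD₀)

lemma adapter_mem_orthC (hshift : IsShiftOf ξ i C N) :
    ∀ P ∈ orthSet (ξ ++ [i]) false N.designs,
      prefD (Action.proper false ξ {i}) P ∈ orthSet ξ true C.designs := by
  intro P hP
  obtain ⟨hPd, hPo⟩ := mem_orth_false.mp hP
  refine mem_orth_true.mpr ⟨design_prefD_neg hPd, ?_⟩
  intro D hD
  rw [hshift] at hD
  exact (mem_biorth_true.mp hD).2 _ (adapter_mem hshift P hP)

lemma daiDesign_mem_orthN : DaiDesign ∈ orthSet (ξ ++ [i]) false N.designs :=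
  mem_orth_false.mpr ⟨design_DaiDesign _, fun D _ => conv_DaiDesign_left⟩

lemma shift_mem_C (hshift : IsShiftOf ξ i C N) :
    ∀ D₀ ∈ N.designs, shiftD ξ i D₀ ∈ C.designs := by
  intro D₀ hD₀
  rw [hshift]
  refine mem_biorth_true.mpr ⟨by rw [shiftD_eq]; exact design_prefD_pos (N.isDesign D₀ hD₀), ?_⟩
  intro E hE
  exact (mem_orth_true.mp hE).2 _ ⟨D₀, hD₀, rfl⟩

lemma daiDesign_mem_C (hshift : IsShiftOf ξ i C N) : DaiDesign ∈ C.designs := by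
  rw [hshift]
  exact mem_biorth_true.mpr ⟨design_DaiDesign ξ, fun E _ => conv_DaiDesign_left⟩

/-- First actions of designs of `C` : all daimon or all `(+, ξ, {i})`. -/
lemma C_first (hshift : IsShiftOf ξ i C N) {D : Set (List Action)} (hD : D ∈ C.designs) :
    (∀ x, [x] ∈ D → x = .daimon) ∨ (∀ x, [x] ∈ D → x = .proper true ξ {i}) := by
  have hDd : IsDesign (simpleBase ξ true) D := by
    rw [hshift] at hD
    exact (mem_biorth_true.mp hD).1
  have hpos : ∀ x, [x] ∈ D → x.isPositive = true := by
    intro x hx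
    obtain ⟨a, t, he, hd⟩ := (hDd.chron _ hx).1.totality (simpleBase_pos_isPositive ξ)
    obtain ⟨rfl, -⟩ := List.cons_eq_cons.mp he
    rcases hd with rfl | ⟨hp, -⟩
    · rfl
    · exact hp
  have hcoh : ∀ x y, [x] ∈ D → [y] ∈ D → x = y := by
    intro x y hx hy
    rcases (hDd.coherent _ hx _ hy).1 [] x y (by simp) (by simp) with he | ⟨hn, -⟩
    · exact he
    · rw [hpos x hx] at hn
      simp at hn
  have hconv : Conv D (prefD (Action.proper false ξ {i}) DaiDesign) True [] := by
    rw [hshift] at hD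
    exact (mem_biorth_true.mp hD).2 _ (adapter_mem hshift DaiDesign daiDesign_mem_orthN)
  cases hconv with
  | daiD hturn hv =>
    rw [List.nil_append, view_singleton] at hv
    exact Or.inl fun x hx => hcoh x .daimon hx hv
  | @stepD s κ hturn hκp hκd hvD hvR hconv' =>
    rw [List.nil_append, view_singleton] at hvD
    have hκ : κ = .proper true ξ {i} := by
      rw [List.nil_append] at hvR
      have h1 : ([κ].map Action.dual) = [κ.dual] := rfl
      rw [h1, view_singleton] at hvR
      rcases hvR with he | ⟨d, hd, hde⟩
      · have := congrArg Action.dual (List.cons_eq_cons.mp he).1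
        simpa using this
      · rcases hd with rfl
        simp only [List.cons_eq_cons] at hde
        exact absurd hde.2 (by simp)
    subst hκ
    exact Or.inr fun x hx => hcoh x _ hx hvD
  | daiR hturn => exact absurd turnD_nil hturn
  | stepR hturn => exact absurd turnD_nil hturn

end Shift



lemma dualSeq_daimon : dualSeq [Action.daimon] = [] := by
  simp [dualSeq]

lemma pathOf_nil_neg (ζ : Address) (E : Set (List Action)) :
    PathOf (simpleBase ζ false) E [] := by
  refine ⟨isPath_nil_neg ζ, ?_⟩
  intro r hr hrne
  exact absurd (List.prefix_nil.mp hr) hrne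

/-- visitable paths of a shift:
`V_{↑A} = {✠} ∪ (+,ξ,{i})·V_A`. -/
theorem visitable_shift (ξ : Address) (i : ℕ)
    (N : Behaviour (ξ ++ [i]) false) (C : Behaviour ξ true)
    (h : IsShiftOf ξ i C N) :
    {p | Visitable C p} =
      insert [Action.daimon]
        {p | ∃ q, Visitable N q ∧ p = Action.proper true ξ {i} :: q} := by
  ext p
  simp only [Set.mem_setOf_eq, Set.mem_insert_iff]
  constructor
  · rintro ⟨D, hD, E, hE, hpD, hpE⟩
    cases p with
    | nil =>
      exfalso
      rw [dualSeq_nil] at hpE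
      exact simpleBase_neg_not_isPositive ξ (hpE.1.daimonFirst rfl)
    | cons a q =>
      have haD : [a] ∈ D := by
        have := hpD.2 [a] ⟨q, rfl⟩ (by simp)
        rwa [view_singleton] at this
      rcases C_first h hD with hcase | hcase
      · left
        have ha : a = .daimon := hcase a haD
        subst ha
        have := hpD.1.daimonLast [] ⟨q, rfl⟩
        simpa using this.symm
      · right
        have ha : a = .proper true ξ {i} := hcase a haD
        subst ha
        refine ⟨q, ?_, rfl⟩
        have hD' := hD
        rw [h] at hD'
        have hDd : IsDesign (simpleBase ξ true) D := (mem_biorth_true.mp hD').1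
        have horth := (mem_biorth_true.mp hD').2
        have hEd : IsDesign (simpleBase ξ false) E := (mem_orth_true.mp hE).1
        have hds : dualSeq (Action.proper true ξ {i} :: q) =
            Action.proper false ξ {i} :: dualSeq q := by
          rw [dualSeq_cons (kb_ne_daimon true)]
          simp
        have hpE' : PathOf (simpleBase ξ false) E
            (Action.proper false ξ {i} :: dualSeq q) := by
          rwa [hds] at hpE
        have hk : [Action.proper false ξ {i}] ∈ E := by
          have := hpE'.2 [Action.proper false ξ {i}] ⟨dualSeq q, rfl⟩ (by simp)
          rwa [view_singleton] at this
        have hdqne : dualSeq q ≠ [] := by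
          refine dualSeq_ne_nil ?_
          intro a' ha'
          cases q with
          | nil => simp at ha'
          | cons b t =>
            simp only [List.head?_cons, Option.some.injEq] at ha'
            obtain ⟨I, rfl⟩ := shift_head_neg (isPath_shift_uncons hpD.1) rfl
            rw [← ha']
            simp
        refine ⟨unpref (Action.proper true ξ {i}) D, ?_,
          unpref (Action.proper false ξ {i}) E, ?_,
          pathOf_shift_uncons hpD, pathOf_ad_uncons hpE' hdqne⟩
        · rw [N.closed]
          refine mem_biorth_false.mpr ⟨design_unpref_pos hDd, ?_⟩
          intro P hP
          have hPd : IsDesign (simpleBase (ξ ++ [i]) true) P := (mem_orth_false.mp hP).1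
          have hconv : Conv D (prefD (Action.proper false ξ {i}) P) True [] :=
            horth _ (adapter_mem h P hP)
          have hsd := sim_down_start hDd (design_prefD_neg hPd) hcase hconv
          rwa [unpref_prefD_eq (design_chron_ne_nil hPd)] at hsd
        · refine mem_orth_false.mpr ⟨design_unpref_neg hEd hk, ?_⟩
          intro D₀ hD₀
          have hD₀d := N.isDesign D₀ hD₀
          have hconv : Conv (shiftD ξ i D₀) E True [] :=
            (mem_orth_true.mp hE).2 _ (shift_mem_C h D₀ hD₀)
          rw [shiftD_eq] at hconv
          have hfirst' : ∀ x, [x] ∈ prefD (Action.proper true ξ {i}) D₀ →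
              x = Action.proper true ξ {i} := by
            rintro x (he | ⟨d, hd, hde⟩)
            · exact (List.cons_eq_cons.mp he).1
            · exact (List.cons_eq_cons.mp hde).1
          have hsd := sim_down_start (design_prefD_pos hD₀d) hEd hfirst' hconv
          rwa [unpref_prefD_eq (design_chron_ne_nil hD₀d)] at hsd
  · rintro (rfl | ⟨q, ⟨D₀, hD₀, P, hP, hq, hqd⟩, rfl⟩)
    · refine ⟨DaiDesign, daiDesign_mem_C h, prefD (Action.proper false ξ {i}) DaiDesign,
        adapter_mem_orthC h _ daiDesign_mem_orthN, ?_, ?_⟩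
      · refine ⟨isPath_daimon ξ, ?_⟩
        intro r hr hrne
        rcases prefix_cons_cases hr with rfl | ⟨r', rfl, hr'⟩
        · exact absurd rfl hrne
        · have : r' = [] := List.prefix_nil.mp hr'
          subst this
          rw [view_singleton]
          rfl
      · rw [dualSeq_daimon]
        exact pathOf_nil_neg ξ _
    · refine ⟨shiftD ξ i D₀, shift_mem_C h D₀ hD₀, prefD (Action.proper false ξ {i}) P,
        adapter_mem_orthC h P hP, ?_, ?_⟩
      · rw [shiftD_eq]
        exact pathOf_shift_cons hq
      · have hds : dualSeq (Action.proper true ξ {i} :: q) =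
            Action.proper false ξ {i} :: dualSeq q := by
          rw [dualSeq_cons (kb_ne_daimon true)]
          simp
        rw [hds]
        exact pathOf_ad_cons hqd


end Ludics
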